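/- arXiv:2105.14169 — 3 statements merged into one kernel-verified Lean document; each statement's English description precedes it below -/
import Mathlib

section
/- For permutations σ, ρ in the symmetric group S_n, the element π_σ · π̄_ρ of the 0-Hecke algebra H_n(0) is nonzero if and only if ℓ(σρ) = ℓ(σ) + ℓ(ρ), where π_σ and π̄_ρ are the standard products of generators π_i and π̄_i = π_i − 1 along reduced words. -/
open scoped Classical

noncomputable section

/-- The symmetric group `S_{n+1}` (the paper's `S_n` with `n = n+1`). -/
abbrev SG (n : ℕ) := Equiv.Perm (Fin (n + 1))

/-- The simple transposition `s_{i+1}` (adjacent transposition swapping `i` and `i+1`,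
0-indexed). -/
def sgen {n : ℕ} (i : Fin n) : SG n := Equiv.swap i.castSucc i.succ

/-- Coxeter length of a permutation, i.e. its number of inversions. -/
def len {n : ℕ} (σ : SG n) : ℕ :=
  (Finset.univ.filter fun p : Fin (n + 1) × Fin (n + 1) => p.1 < p.2 ∧ σ p.2 < σ p.1).card

/-- The left weak Bruhat order on `S_{n+1}`. -/
def leL {n : ℕ} (σ ρ : SG n) : Prop := ∃ γ, ρ = γ * σ ∧ len ρ = len σ + len γ

/-- Left descent set. -/
def DesL {n : ℕ} (σ : SG n) : Set (Fin n) := {i | len (sgen i * σ) < len σ}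

/-- Right descent set. -/
def DesR {n : ℕ} (σ : SG n) : Set (Fin n) := {i | len (σ * sgen i) < len σ}

/-- The longest element `w₀` of `S_{n+1}`. -/
def w0 {n : ℕ} : SG n := ⟨Fin.rev, Fin.rev, Fin.rev_rev, Fin.rev_rev⟩

lemma len_one {n : ℕ} : len (1 : SG n) = 0 := by
  unfold len
  rw [Finset.card_eq_zero, Finset.eq_empty_iff_forall_notMem]
  rintro p hp
  rw [Finset.mem_filter] at hp
  obtain ⟨-, h1, h2⟩ := hp
  simp only [Equiv.Perm.one_apply] at h2
  exact absurd (h1.trans h2) (lt_irrefl _)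

lemma leL_refl {n : ℕ} (σ : SG n) : leL σ σ :=
  ⟨1, (one_mul σ).symm, by simp [len_one]⟩

/-- The defining relations of the 0-Hecke algebra `H_{n+1}(0)`. -/
inductive HRel (n : ℕ) : FreeAlgebra ℂ (Fin n) → FreeAlgebra ℂ (Fin n) → Prop
  | idem (i : Fin n) :
      HRel n (FreeAlgebra.ι ℂ i * FreeAlgebra.ι ℂ i) (FreeAlgebra.ι ℂ i)
  | braid (i j : Fin n) (h : (i : ℕ) + 1 = j) :
      HRel n (FreeAlgebra.ι ℂ i * FreeAlgebra.ι ℂ j * FreeAlgebra.ι ℂ i)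
             (FreeAlgebra.ι ℂ j * FreeAlgebra.ι ℂ i * FreeAlgebra.ι ℂ j)
  | comm (i j : Fin n) (h : (i : ℕ) + 2 ≤ j) :
      HRel n (FreeAlgebra.ι ℂ i * FreeAlgebra.ι ℂ j) (FreeAlgebra.ι ℂ j * FreeAlgebra.ι ℂ i)

/-- The 0-Hecke algebra `H_{n+1}(0)` over `ℂ`. -/
abbrev Hecke (n : ℕ) := RingQuot (HRel n)

/-- The generator `π_{i+1}` of the 0-Hecke algebra. -/
def hpi {n : ℕ} (i : Fin n) : Hecke n :=
  RingQuot.mkAlgHom ℂ (HRel n) (FreeAlgebra.ι ℂ i)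

/-- The element `π̄_{i+1} = π_{i+1} - 1`. -/
def hpibar {n : ℕ} (i : Fin n) : Hecke n := hpi i - 1

/-- `l` is a reduced word for `σ`. -/
def IsReducedWord {n : ℕ} (l : List (Fin n)) (σ : SG n) : Prop :=
  (l.map sgen).prod = σ ∧ l.length = len σ

/-- `π_σ`, the product of the generators `π_i` along a reduced word for `σ`. -/
noncomputable def piPerm {n : ℕ} (σ : SG n) : Hecke n :=
  if h : ∃ l : List (Fin n), IsReducedWord l σ then ((h.choose.map hpi).prod) else 0

/-- `π̄_σ`, the product of the elements `π̄_i` along a reduced word for `σ`. -/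
noncomputable def pibarPerm {n : ℕ} (σ : SG n) : Hecke n :=
  if h : ∃ l : List (Fin n), IsReducedWord l σ then ((h.choose.map hpibar).prod) else 0

/-- The left weak Bruhat interval `[σ,ρ]_L`. -/
abbrev Itv {n : ℕ} (σ ρ : SG n) := {γ : SG n // leL σ γ ∧ leL γ ρ}

/-- The action of the generator `π_{i+1}` on a basis element of `ℂ[σ,ρ]_L`. -/
noncomputable def bpiFun {n : ℕ} (σ ρ : SG n) (i : Fin n) (γ : Itv σ ρ) :
    Itv σ ρ →₀ ℂ :=
  if i ∈ DesL γ.1 then Finsupp.single γ 1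
  else if h : leL σ (sgen i * γ.1) ∧ leL (sgen i * γ.1) ρ then
    Finsupp.single ⟨sgen i * γ.1, h⟩ 1
  else 0

/-- The operator `𝛑_i` on `ℂ[σ,ρ]_L` (the action of `π_{i+1}` on `B(σ,ρ)`). -/
noncomputable def bpi {n : ℕ} (σ ρ : SG n) (i : Fin n) :
    (Itv σ ρ →₀ ℂ) →ₗ[ℂ] (Itv σ ρ →₀ ℂ) :=
  Finsupp.lift _ ℂ _ (bpiFun σ ρ i)

/-- The action of `π̄_{i+1}` on a basis element of the module `B̄(σ,ρ)`. -/
noncomputable def bbarFun {n : ℕ} (σ ρ : SG n) (i : Fin n) (γ : Itv σ ρ) :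
    Itv σ ρ →₀ ℂ :=
  if i ∈ DesL γ.1 then -Finsupp.single γ 1
  else if h : leL σ (sgen i * γ.1) ∧ leL (sgen i * γ.1) ρ then
    Finsupp.single ⟨sgen i * γ.1, h⟩ 1
  else 0

/-- The operator giving the action of `π̄_{i+1}` on `B̄(σ,ρ)`. -/
noncomputable def bbar {n : ℕ} (σ ρ : SG n) (i : Fin n) :
    (Itv σ ρ →₀ ℂ) →ₗ[ℂ] (Itv σ ρ →₀ ℂ) :=
  Finsupp.lift _ ℂ _ (bbarFun σ ρ i)

namespace StmtAux
open Finset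

variable {n : ℕ}

def Invs (σ : SG n) : Finset (Fin (n+1) × Fin (n+1)) :=
  Finset.univ.filter fun p => p.1 < p.2 ∧ σ p.2 < σ p.1

lemma len_eq_card (σ : SG n) : len σ = (Invs σ).card := rfl

def NInv (ρ : SG n) : Finset (Fin (n+1) × Fin (n+1)) :=
  Finset.univ.filter fun p => p.1 < p.2 ∧ ρ⁻¹ p.2 < ρ⁻¹ p.1

lemma mem_Invs {σ : SG n} {p : Fin (n+1) × Fin (n+1)} :
    p ∈ Invs σ ↔ p.1 < p.2 ∧ σ p.2 < σ p.1 := by simp [Invs]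

lemma mem_NInv {ρ : SG n} {p : Fin (n+1) × Fin (n+1)} :
    p ∈ NInv ρ ↔ p.1 < p.2 ∧ ρ⁻¹ p.2 < ρ⁻¹ p.1 := by simp [NInv]

lemma card_NInv (ρ : SG n) : (NInv ρ).card = len ρ := by
  rw [len_eq_card]
  apply Finset.card_bij' (fun p _ => (ρ⁻¹ p.2, ρ⁻¹ p.1)) (fun p _ => (ρ p.2, ρ p.1))
  · intro p hp
    rw [mem_NInv] at hp
    rw [mem_Invs]
    refine ⟨hp.2, ?_⟩
    simp [hp.1]
  · intro p hp
    rw [mem_Invs] at hp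
    rw [mem_NInv]
    refine ⟨hp.2, ?_⟩
    simp [hp.1]
  · intro p hp; simp
  · intro p hp; simp

lemma len_mul_card (σ ρ : SG n) :
    len (σ * ρ) = ((Invs σ \ NInv ρ) ∪ (NInv ρ \ Invs σ)).card := by
  rw [len_eq_card]
  apply Finset.card_bij'
    (fun p _ => if ρ p.1 < ρ p.2 then (ρ p.1, ρ p.2) else (ρ p.2, ρ p.1))
    (fun q _ => if ρ⁻¹ q.1 < ρ⁻¹ q.2 then (ρ⁻¹ q.1, ρ⁻¹ q.2) else (ρ⁻¹ q.2, ρ⁻¹ q.1))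
  · intro p hp
    rw [mem_Invs] at hp
    obtain ⟨h1, h2⟩ := hp
    simp only [Equiv.Perm.mul_apply] at h2
    rcases lt_or_gt_of_ne (fun h : ρ p.1 = ρ p.2 => absurd (ρ.injective h) h1.ne) with h | h
    · rw [if_pos h]
      simp only [mem_union, mem_sdiff, mem_Invs, mem_NInv]
      left
      refine ⟨⟨h, h2⟩, ?_⟩
      rintro ⟨-, hlt⟩
      simp only [Equiv.Perm.coe_inv, Equiv.symm_apply_apply] at hlt
      exact absurd (h1.trans hlt) (lt_irrefl _)
    · rw [if_neg (not_lt_of_gt h)]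
      simp only [mem_union, mem_sdiff, mem_Invs, mem_NInv]
      right
      refine ⟨⟨h, by simpa using h1⟩, ?_⟩
      rintro ⟨-, hlt⟩
      exact absurd (h2.trans hlt) (lt_irrefl _)
  · intro q hq
    simp only [mem_union, mem_sdiff, mem_Invs, mem_NInv, not_and] at hq
    rcases hq with ⟨⟨h1, h2⟩, h3⟩ | ⟨⟨h1, h2⟩, h3⟩
    · have h4 : ρ⁻¹ q.1 < ρ⁻¹ q.2 := by
        rcases lt_or_gt_of_ne (fun h : ρ⁻¹ q.1 = ρ⁻¹ q.2 => absurd (ρ⁻¹.injective h) h1.ne)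
          with h | h
        · exact h
        · exact absurd h (h3 h1)
      rw [if_pos h4, mem_Invs]
      refine ⟨h4, ?_⟩
      simp only [Equiv.Perm.mul_apply, Equiv.Perm.coe_inv, Equiv.apply_symm_apply]
      exact h2
    · rw [if_neg (not_lt_of_gt h2), mem_Invs]
      refine ⟨h2, ?_⟩
      simp only [Equiv.Perm.mul_apply, Equiv.Perm.coe_inv, Equiv.apply_symm_apply]
      exact lt_of_le_of_ne (by simpa using h3 h1) (fun hc => h1.ne (σ.injective hc))
  · intro p hp
    rw [mem_Invs] at hp
    have h1 := hp.1
    split_ifs with h h2 h2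
    · simp only [Equiv.Perm.coe_inv, Equiv.symm_apply_apply] at h2 ⊢
    · simp only [Equiv.Perm.coe_inv, Equiv.symm_apply_apply] at h2 ⊢
      exact absurd h1 h2
    · simp only [Equiv.Perm.coe_inv, Equiv.symm_apply_apply] at h2 ⊢
      exact absurd h1 (not_lt_of_gt h2)
    · simp only [Equiv.Perm.coe_inv, Equiv.symm_apply_apply] at h2 ⊢
  · intro q hq
    have h1 : q.1 < q.2 := by
      simp only [mem_union, mem_sdiff, mem_Invs, mem_NInv] at hq
      rcases hq with ⟨⟨h, -⟩, -⟩ | ⟨⟨h, -⟩, -⟩ <;> exact h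
    split_ifs with h h2 h2
    · simp only [Equiv.Perm.coe_inv, Equiv.apply_symm_apply] at h2 ⊢
    · simp only [Equiv.Perm.coe_inv, Equiv.apply_symm_apply] at h2 ⊢
      exact absurd h1 h2
    · simp only [Equiv.Perm.coe_inv, Equiv.apply_symm_apply] at h2 ⊢
      exact absurd h1 (not_lt_of_gt h2)
    · simp only [Equiv.Perm.coe_inv, Equiv.apply_symm_apply] at h2 ⊢

lemma len_mul_add (σ ρ : SG n) :
    len σ + len ρ = len (σ * ρ) + 2 * ((Invs σ) ∩ (NInv ρ)).card := by
  rw [len_mul_card σ ρ,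
    Finset.card_union_of_disjoint (disjoint_sdiff_sdiff),
    len_eq_card σ, ← card_NInv ρ]
  have h1 := Finset.card_sdiff_add_card_inter (Invs σ) (NInv ρ)
  have h2 := Finset.card_sdiff_add_card_inter (NInv ρ) (Invs σ)
  rw [Finset.inter_comm] at h2
  omega

end StmtAux
namespace StmtAux
open Finset

variable {n : ℕ}

lemma sgen_inv (i : Fin n) : (sgen i)⁻¹ = sgen i := by
  simp [sgen]

lemma Invs_sgen (i : Fin n) :
    Invs (sgen i) = {(i.castSucc, i.succ)} := by
  ext ⟨a, b⟩
  simp only [mem_Invs, Finset.mem_singleton, Prod.mk.injEq, sgen]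
  constructor
  · rintro ⟨hab, hs⟩
    rcases eq_or_ne a i.castSucc with rfl | ha
    · rcases eq_or_ne b i.succ with rfl | hb'
      · exact ⟨rfl, rfl⟩
      · exfalso
        rcases eq_or_ne b i.castSucc with rfl | hb
        · exact lt_irrefl _ hab
        · rw [Equiv.swap_apply_left, Equiv.swap_apply_of_ne_of_ne hb hb'] at hs
          simp only [Fin.lt_def, Fin.coe_castSucc, Fin.val_succ] at hs hab
          omega
    · exfalso
      rcases eq_or_ne a i.succ with rfl | ha'
      · have hb : b ≠ i.castSucc := fun hc => by
          subst hc
          exact absurd (hab.trans (Fin.castSucc_lt_succ (i := i))) (lt_irrefl _)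
        have hb' : b ≠ i.succ := hab.ne'
        rw [Equiv.swap_apply_right, Equiv.swap_apply_of_ne_of_ne hb hb'] at hs
        have := (Fin.castSucc_lt_succ (i := i)).trans hab
        exact absurd (hs.trans this) (lt_irrefl _)
      · rcases eq_or_ne b i.castSucc with rfl | hb
        · rw [Equiv.swap_apply_left, Equiv.swap_apply_of_ne_of_ne ha ha'] at hs
          have := hab.trans (Fin.castSucc_lt_succ (i := i))
          exact absurd (this.trans hs) (lt_irrefl _)
        · rcases eq_or_ne b i.succ with rfl | hb'
          · rw [Equiv.swap_apply_right, Equiv.swap_apply_of_ne_of_ne ha ha'] at hs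
            simp only [Fin.lt_def, Fin.coe_castSucc, Fin.val_succ, Fin.ext_iff] at hs hab ha
            omega
          · rw [Equiv.swap_apply_of_ne_of_ne ha ha',
              Equiv.swap_apply_of_ne_of_ne hb hb'] at hs
            exact absurd (hab.trans hs) (lt_irrefl _)
  · rintro ⟨rfl, rfl⟩
    refine ⟨Fin.castSucc_lt_succ (i := i), ?_⟩
    rw [Equiv.swap_apply_left, Equiv.swap_apply_right]
    exact Fin.castSucc_lt_succ (i := i)

lemma NInv_sgen (i : Fin n) :
    NInv (sgen i) = {(i.castSucc, i.succ)} := by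
  have : NInv (sgen i) = Invs (sgen i) := by
    unfold NInv Invs
    rw [sgen_inv]
  rw [this, Invs_sgen]

lemma len_sgen (i : Fin n) : len (sgen i) = 1 := by
  rw [← card_NInv, NInv_sgen]; simp

/-- additivity criterion -/
lemma len_add_iff {σ ρ : SG n} :
    len (σ * ρ) = len σ + len ρ ↔
      ∀ a b : Fin (n+1), a < b → σ b < σ a → ρ⁻¹ a < ρ⁻¹ b := by
  have h := len_mul_add σ ρ
  have hsub : len (σ * ρ) ≤ len σ + len ρ := by omega
  constructor
  · intro he a b hab hs
    have hcard : ((Invs σ) ∩ (NInv ρ)).card = 0 := by omega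
    rw [Finset.card_eq_zero] at hcard
    rcases lt_or_gt_of_ne (fun hc : ρ⁻¹ a = ρ⁻¹ b => hab.ne (ρ⁻¹.injective hc)) with h' | h'
    · exact h'
    · exfalso
      have : (a, b) ∈ (Invs σ) ∩ (NInv ρ) := by
        exact Finset.mem_inter.mpr ⟨mem_Invs.mpr ⟨hab, hs⟩, mem_NInv.mpr ⟨hab, h'⟩⟩
      rw [hcard] at this
      simp at this
  · intro hcrit
    have hcard : ((Invs σ) ∩ (NInv ρ)) = ∅ := by
      rw [Finset.eq_empty_iff_forall_notMem]
      rintro ⟨a, b⟩ hm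
      rw [Finset.mem_inter, mem_Invs, mem_NInv] at hm
      exact absurd (hcrit a b hm.1.1 hm.1.2) (not_lt_of_gt hm.2.2)
    rw [hcard] at h
    simp at h
    omega

lemma len_mul_le (σ ρ : SG n) : len (σ * ρ) ≤ len σ + len ρ := by
  have := len_mul_add σ ρ; omega

/-- right multiplication dichotomy -/
lemma len_mul_sgen (σ : SG n) (i : Fin n) :
    (σ i.castSucc < σ i.succ ∧ len (σ * sgen i) = len σ + 1) ∨
    (σ i.succ < σ i.castSucc ∧ len σ = len (σ * sgen i) + 1) := by
  have h := len_mul_add σ (sgen i)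
  rw [len_sgen, NInv_sgen] at h
  rcases lt_or_gt_of_ne (fun hc : σ i.castSucc = σ i.succ =>
    (Fin.castSucc_lt_succ (i := i)).ne (σ.injective hc)) with h' | h'
  · left
    refine ⟨h', ?_⟩
    have : Invs σ ∩ {(i.castSucc, i.succ)} = ∅ := by
      rw [Finset.eq_empty_iff_forall_notMem]
      rintro p hp
      rw [Finset.mem_inter, Finset.mem_singleton] at hp
      obtain ⟨hp1, rfl⟩ := hp
      rw [mem_Invs] at hp1
      exact absurd (h'.trans hp1.2) (lt_irrefl _)
    rw [this] at h; simp at h; omega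
  · right
    refine ⟨h', ?_⟩
    have : Invs σ ∩ {(i.castSucc, i.succ)} = {(i.castSucc, i.succ)} := by
      rw [Finset.inter_eq_right.mpr]
      intro p hp
      rw [Finset.mem_singleton] at hp
      subst hp
      rw [mem_Invs]
      exact ⟨Fin.castSucc_lt_succ (i := i), h'⟩
    rw [this] at h; simp at h; omega

lemma len_sgen_mul (σ : SG n) (i : Fin n) :
    (σ⁻¹ i.castSucc < σ⁻¹ i.succ ∧ len (sgen i * σ) = len σ + 1) ∨
    (σ⁻¹ i.succ < σ⁻¹ i.castSucc ∧ len σ = len (sgen i * σ) + 1) := by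
  have h := len_mul_add (sgen i) σ
  rw [len_sgen, Invs_sgen] at h
  rcases lt_or_gt_of_ne (fun hc : σ⁻¹ i.castSucc = σ⁻¹ i.succ =>
    (Fin.castSucc_lt_succ (i := i)).ne (σ⁻¹.injective hc)) with h' | h'
  · left
    refine ⟨h', ?_⟩
    have : ({(i.castSucc, i.succ)} : Finset _) ∩ NInv σ = ∅ := by
      rw [Finset.eq_empty_iff_forall_notMem]
      rintro p hp
      rw [Finset.mem_inter, Finset.mem_singleton] at hp
      obtain ⟨rfl, hp2⟩ := hp
      rw [mem_NInv] at hp2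
      exact absurd (h'.trans hp2.2) (lt_irrefl _)
    rw [this] at h; simp at h; omega
  · right
    refine ⟨h', ?_⟩
    have : ({(i.castSucc, i.succ)} : Finset _) ∩ NInv σ = {(i.castSucc, i.succ)} := by
      rw [Finset.inter_eq_left.mpr]
      intro p hp
      rw [Finset.mem_singleton] at hp
      subst hp
      rw [mem_NInv]
      exact ⟨Fin.castSucc_lt_succ (i := i), h'⟩
    rw [this] at h; simp at h; omega

end StmtAux
namespace StmtAux
open Finset

variable {n : ℕ}

lemma exists_descent {σ : SG n} (h : σ ≠ 1) :
    ∃ i : Fin n, σ⁻¹ i.succ < σ⁻¹ i.castSucc := by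
  by_contra hc
  push_neg at hc
  have hmono : StrictMono (σ⁻¹ : SG n) := by
    rw [Fin.strictMono_iff_lt_succ]
    intro i
    rcases lt_or_gt_of_ne (fun he : σ⁻¹ i.castSucc = σ⁻¹ i.succ =>
      (Fin.castSucc_lt_succ (i := i)).ne (σ⁻¹.injective he)) with h' | h'
    · exact h'
    · exact absurd (hc i) (not_le_of_gt h')
  have hiso : (StrictMono.orderIsoOfSurjective _ hmono (σ⁻¹).surjective) =
      OrderIso.refl (Fin (n+1)) := Subsingleton.elim _ _
  apply h
  have hinv : (σ⁻¹ : SG n) = 1 := by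
    refine Equiv.ext fun x => ?_
    have := congrArg (fun (e : Fin (n+1) ≃o Fin (n+1)) => e x) hiso
    simpa using this
  rw [← inv_inv σ, hinv]
  simp

lemma exists_descent_right {σ : SG n} (h : σ ≠ 1) :
    ∃ i : Fin n, σ i.succ < σ i.castSucc := by
  obtain ⟨i, hi⟩ := exists_descent (σ := σ⁻¹) (by simpa using fun hc => h (by simp [← hc]))
  exact ⟨i, by simpa using hi⟩

lemma exists_reduced_word (σ : SG n) : ∃ l : List (Fin n), IsReducedWord l σ := by
  generalize hm : len σ = m
  induction m generalizing σ with
  | zero =>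
    have h1 : σ = 1 := by
      by_contra hc
      obtain ⟨i, hi⟩ := exists_descent hc
      rcases len_sgen_mul σ i with ⟨h', _⟩ | ⟨_, h'⟩
      · exact absurd (hi.trans h') (lt_irrefl _)
      · omega
    subst h1
    exact ⟨[], by simp [IsReducedWord, len_one]⟩
  | succ m ih =>
    have h1 : σ ≠ 1 := fun hc => by rw [hc, len_one] at hm; exact Nat.succ_ne_zero m hm.symm
    obtain ⟨i, hi⟩ := exists_descent h1
    rcases len_sgen_mul σ i with ⟨h', _⟩ | ⟨_, h'⟩
    · exact absurd (hi.trans h') (lt_irrefl _)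
    · obtain ⟨l, hl1, hl2⟩ := ih (sgen i * σ) (by omega)
      refine ⟨i :: l, ?_, ?_⟩
      · rw [List.map_cons, List.prod_cons, hl1]
        simp [sgen, ← mul_assoc]
      · simp [hl2]; omega

lemma len_prod_le (l : List (Fin n)) : len ((l.map sgen).prod) ≤ l.length := by
  induction l with
  | nil => simp [len_one]
  | cons i t ih =>
    rw [List.map_cons, List.prod_cons]
    rcases len_sgen_mul ((t.map sgen).prod) i with ⟨_, h'⟩ | ⟨_, h'⟩ <;>
      simp only [List.length_cons] <;> omega

lemma reduced_cons {i : Fin n} {t : List (Fin n)} {σ : SG n}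
    (h : IsReducedWord (i :: t) σ) :
    IsReducedWord t ((t.map sgen).prod) ∧ σ = sgen i * (t.map sgen).prod ∧
      len σ = len ((t.map sgen).prod) + 1 := by
  obtain ⟨h1, h2⟩ := h
  rw [List.map_cons, List.prod_cons] at h1
  have hle := len_prod_le t
  rcases len_sgen_mul ((t.map sgen).prod) i with ⟨_, h'⟩ | ⟨_, h'⟩ <;>
    rw [h1] at h' <;> simp only [List.length_cons] at h2
  · exact ⟨⟨rfl, by omega⟩, h1.symm, by omega⟩
  · omega

/-- appending an ascent to a reduced word -/
lemma reduced_append {a : List (Fin n)} {σ : SG n} {i : Fin n}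
    (ha : IsReducedWord a σ) (hasc : len (σ * sgen i) = len σ + 1) :
    IsReducedWord (a ++ [i]) (σ * sgen i) := by
  obtain ⟨h1, h2⟩ := ha
  constructor
  · rw [List.map_append, List.prod_append, h1]; simp
  · simp [h2, hasc]

/-- the lifting lemma -/
lemma lifting {σ ρ' : SG n} {i : Fin n}
    (hadd : len (σ * ρ') = len σ + len ρ')
    (hascR : σ i.castSucc < σ i.succ)
    (hascL : ρ'⁻¹ i.castSucc < ρ'⁻¹ i.succ) :
    len (σ * (sgen i * ρ')) = len σ + len (sgen i * ρ') := by
  have hlen : len (sgen i * ρ') = len ρ' + 1 := by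
    rcases len_sgen_mul ρ' i with ⟨_, h'⟩ | ⟨h', _⟩
    · exact h'
    · exact absurd (hascL.trans h') (lt_irrefl _)
  rw [len_add_iff] at hadd ⊢
  intro a b hab hs
  have hinv : (sgen i * ρ')⁻¹ = ρ'⁻¹ * sgen i := by rw [mul_inv_rev, sgen_inv]
  simp only [hinv, Equiv.Perm.mul_apply]
  -- sgen i is the swap of i.castSucc and i.succ
  rcases eq_or_ne a i.castSucc with rfl | ha
  · rcases eq_or_ne b i.succ with rfl | hb'
    · exact absurd hs (not_lt_of_gt hascR)
    · have hb : b ≠ i.castSucc := hab.ne'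
      rw [show sgen i i.castSucc = i.succ from Equiv.swap_apply_left _ _,
        show sgen i b = b from Equiv.swap_apply_of_ne_of_ne hb hb']
      rcases lt_or_gt_of_ne (fun he : σ b = σ i.succ => hb' (σ.injective he)) with hsb | hsb
      · have hib : i.succ < b := by
          rcases lt_trichotomy i.succ b with h' | h' | h'
          · exact h'
          · exact absurd h'.symm hb'
          · exfalso
            simp only [Fin.lt_def, Fin.coe_castSucc, Fin.val_succ] at hab h'
            omega
        exact hadd i.succ b hib hsb
      · exact absurd (hsb.trans hs) (lt_asymm hascR)
    -- done a = castSucc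
  · rcases eq_or_ne a i.succ with rfl | ha'
    · have hb : b ≠ i.castSucc := fun hc => by
        subst hc
        exact absurd (hab.trans (Fin.castSucc_lt_succ (i := i))) (lt_irrefl _)
      have hb' : b ≠ i.succ := hab.ne'
      rw [show sgen i i.succ = i.castSucc from Equiv.swap_apply_right _ _,
        show sgen i b = b from Equiv.swap_apply_of_ne_of_ne hb hb']
      have h1 : ρ'⁻¹ i.succ < ρ'⁻¹ b := hadd i.succ b hab hs
      -- need ρ'⁻¹ i.castSucc < ρ'⁻¹ b
      exact hascL.trans h1
    · rcases eq_or_ne b i.castSucc with rfl | hb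
      · rw [show sgen i i.castSucc = i.succ from Equiv.swap_apply_left _ _,
          show sgen i a = a from Equiv.swap_apply_of_ne_of_ne ha ha']
        rcases lt_or_gt_of_ne (fun he : σ i.succ = σ a => ha' (σ.injective he).symm)
          with hsb | hsb
        · exact hadd a i.succ (hab.trans (Fin.castSucc_lt_succ (i := i))) hsb
        · exact (hadd a i.castSucc hab hs).trans hascL
      · rcases eq_or_ne b i.succ with rfl | hb'
        · rw [show sgen i i.succ = i.castSucc from Equiv.swap_apply_right _ _,
            show sgen i a = a from Equiv.swap_apply_of_ne_of_ne ha ha']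
          have hacs : a < i.castSucc := by
            rcases lt_trichotomy a i.castSucc with h' | h' | h'
            · exact h'
            · exact absurd h' ha
            · exfalso
              simp only [Fin.lt_def, Fin.coe_castSucc, Fin.val_succ, Fin.ext_iff] at hab h' ha
              omega
          rcases lt_or_gt_of_ne (fun he : σ i.castSucc = σ a => ha (σ.injective he).symm)
            with hsb | hsb
          · exact hadd a i.castSucc hacs hsb
          · exact absurd (hs.trans hsb) (lt_asymm hascR)
        · rw [show sgen i a = a from Equiv.swap_apply_of_ne_of_ne ha ha',
            show sgen i b = b from Equiv.swap_apply_of_ne_of_ne hb hb']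
          exact hadd a b hab hs

end StmtAux
namespace StmtAux
open Finset

variable {n : ℕ}

lemma sgen_apply_ne (k : Fin n) {x : Fin (n+1)} (h1 : x ≠ k.castSucc) (h2 : x ≠ k.succ) :
    sgen k x = x := Equiv.swap_apply_of_ne_of_ne h1 h2

lemma sgen_sq (i : Fin n) : sgen i * sgen i = 1 := Equiv.swap_mul_self _ _

lemma sgen_mul_comm {s t : Fin n} (h : (s:ℕ)+2 ≤ t) : sgen s * sgen t = sgen t * sgen s := by
  have h1 : sgen s t.castSucc = t.castSucc :=
    sgen_apply_ne s (by simp [Fin.ext_iff]; omega) (by simp [Fin.ext_iff]; omega)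
  have h2 : sgen s t.succ = t.succ :=
    sgen_apply_ne s (by simp [Fin.ext_iff]; omega) (by simp [Fin.ext_iff]; omega)
  have e1 : sgen s * sgen t = Equiv.swap (sgen s t.castSucc) (sgen s t.succ) * sgen s :=
    Equiv.mul_swap_eq_swap_mul _ _ _
  rw [e1, h1, h2]
  rfl

lemma sgen_braid {s t : Fin n} (h : (s:ℕ)+1 = t) :
    sgen s * sgen t * sgen s = sgen t * sgen s * sgen t := by
  have hts : t.castSucc = s.succ := by simp [Fin.ext_iff]; omega
  have e1 : sgen s * sgen t * sgen s = Equiv.swap (sgen s t.castSucc) (sgen s t.succ) := by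
    rw [Equiv.swap_apply_apply, sgen_inv]
    rfl
  have e2 : sgen t * sgen s * sgen t = Equiv.swap (sgen t s.castSucc) (sgen t s.succ) := by
    rw [Equiv.swap_apply_apply, sgen_inv]
    rfl
  rw [e1, e2, hts, show sgen s s.succ = s.castSucc from Equiv.swap_apply_right _ _,
    show sgen s t.succ = t.succ from
      sgen_apply_ne s (by simp [Fin.ext_iff]; omega) (by simp [Fin.ext_iff]; omega),
    show sgen t s.castSucc = s.castSucc from
      sgen_apply_ne t (by simp [Fin.ext_iff]; omega) (by simp [Fin.ext_iff]; omega),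
    show sgen t s.succ = t.succ from by rw [← hts]; exact Equiv.swap_apply_left _ _]

/-- product of `π` generators along a word -/
def hword (l : List (Fin n)) : Hecke n := (l.map hpi).prod

@[simp] lemma hword_nil : hword ([] : List (Fin n)) = 1 := rfl

@[simp] lemma hword_cons (i : Fin n) (l : List (Fin n)) :
    hword (i :: l) = hpi i * hword l := by simp [hword]

lemma hword_append (a b : List (Fin n)) : hword (a ++ b) = hword a * hword b := by
  simp [hword]

lemma hpi_idem (i : Fin n) : hpi i * hpi i = hpi i := by
  unfold hpi
  rw [← map_mul]
  exact RingQuot.mkAlgHom_rel ℂ (HRel.idem i)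

lemma hpi_braid {s t : Fin n} (h : (s:ℕ)+1 = t) :
    hpi s * hpi t * hpi s = hpi t * hpi s * hpi t := by
  unfold hpi
  rw [← map_mul, ← map_mul, ← map_mul, ← map_mul]
  exact RingQuot.mkAlgHom_rel ℂ (HRel.braid s t h)

lemma hpi_comm {s t : Fin n} (h : (s:ℕ)+2 ≤ t) :
    hpi s * hpi t = hpi t * hpi s := by
  unfold hpi
  rw [← map_mul, ← map_mul]
  exact RingQuot.mkAlgHom_rel ℂ (HRel.comm s t h)

lemma descent_cancel {σ : SG n} {i : Fin n} (h : σ⁻¹ i.succ < σ⁻¹ i.castSucc) :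
    len (sgen i * σ) + 1 = len σ := by
  rcases len_sgen_mul σ i with ⟨h', _⟩ | ⟨_, h'⟩
  · exact absurd (h.trans h') (lt_irrefl _)
  · omega

lemma ascent_add {σ : SG n} {i : Fin n} (h : σ⁻¹ i.castSucc < σ⁻¹ i.succ) :
    len (sgen i * σ) = len σ + 1 := by
  rcases len_sgen_mul σ i with ⟨_, h'⟩ | ⟨h', _⟩
  · exact h'
  · exact absurd (h.trans h') (lt_irrefl _)

lemma red_cons {i : Fin n} {c : List (Fin n)} {τ : SG n}
    (hc : IsReducedWord c τ) (hlen : len (sgen i * τ) = len τ + 1) :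
    IsReducedWord (i :: c) (sgen i * τ) := by
  obtain ⟨h1, h2⟩ := hc
  exact ⟨by rw [List.map_cons, List.prod_cons, h1], by simp [h2, hlen]⟩

/-- descents of `σ` from reduced words -/
lemma descent_of_red_cons {s : Fin n} {a' : List (Fin n)} {σ : SG n}
    (ha : IsReducedWord (s :: a') σ) : σ⁻¹ s.succ < σ⁻¹ s.castSucc := by
  obtain ⟨hred, heq, hlen⟩ := reduced_cons ha
  have hσ : sgen s * σ = (a'.map sgen).prod := by
    rw [heq, ← mul_assoc, sgen_sq, one_mul]
  rcases len_sgen_mul σ s with ⟨_, h'⟩ | ⟨h', _⟩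
  · rw [hσ] at h'; omega
  · exact h'

lemma matsumoto_aux_far {m : ℕ}
    (ih : ∀ k, k < m → ∀ σ : SG n, len σ = k → ∀ a b, IsReducedWord a σ →
      IsReducedWord b σ → hword a = hword b)
    {σ : SG n} {s t : Fin n} {a' b' : List (Fin n)} (hm : len σ = m)
    (hds : σ⁻¹ s.succ < σ⁻¹ s.castSucc) (hdt : σ⁻¹ t.succ < σ⁻¹ t.castSucc)
    (hfar : (s:ℕ)+2 ≤ t)
    (ha' : IsReducedWord a' (sgen s * σ)) (hb' : IsReducedWord b' (sgen t * σ)) :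
    hword (s :: a') = hword (t :: b') := by
  have hne : ∀ x : Fin (n+1), x = t.castSucc ∨ x = t.succ → sgen s x = x := by
    rintro x (rfl | rfl) <;>
      exact sgen_apply_ne s (by simp [Fin.ext_iff]; omega) (by simp [Fin.ext_iff]; omega)
  have hne' : ∀ x : Fin (n+1), x = s.castSucc ∨ x = s.succ → sgen t x = x := by
    rintro x (rfl | rfl) <;>
      exact sgen_apply_ne t (by simp [Fin.ext_iff]; omega) (by simp [Fin.ext_iff]; omega)
  -- t is a descent of sgen s * σ
  have hdts : (sgen s * σ)⁻¹ t.succ < (sgen s * σ)⁻¹ t.castSucc := by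
    rw [mul_inv_rev, sgen_inv]
    simp only [Equiv.Perm.mul_apply]
    rw [hne _ (Or.inr rfl), hne _ (Or.inl rfl)]
    exact hdt
  have hdst : (sgen t * σ)⁻¹ s.succ < (sgen t * σ)⁻¹ s.castSucc := by
    rw [mul_inv_rev, sgen_inv]
    simp only [Equiv.Perm.mul_apply]
    rw [hne' _ (Or.inr rfl), hne' _ (Or.inl rfl)]
    exact hds
  have hlens : len (sgen s * σ) + 1 = len σ := descent_cancel hds
  have hlent : len (sgen t * σ) + 1 = len σ := descent_cancel hdt
  set v : SG n := sgen t * (sgen s * σ) with hv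
  have hlenv : len v + 1 = len (sgen s * σ) := descent_cancel hdts
  obtain ⟨c, hc⟩ := exists_reduced_word v
  have htv : sgen t * v = sgen s * σ := by
    rw [hv, ← mul_assoc, sgen_sq, one_mul]
  have hredtc : IsReducedWord (t :: c) (sgen s * σ) := by
    have := red_cons hc (by rw [htv]; omega)
    rwa [htv] at this
  have hsv : sgen s * v = sgen t * σ := by
    rw [hv, ← mul_assoc, ← mul_assoc, sgen_mul_comm hfar, mul_assoc, mul_assoc,
      ← mul_assoc (sgen s) (sgen s), sgen_sq, one_mul]
  have hredsc : IsReducedWord (s :: c) (sgen t * σ) := by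
    have := red_cons hc (by rw [hsv]; omega)
    rwa [hsv] at this
  have e1 : hword a' = hword (t :: c) :=
    ih (len (sgen s * σ)) (by omega) _ rfl _ _ ha' hredtc
  have e2 : hword b' = hword (s :: c) :=
    ih (len (sgen t * σ)) (by omega) _ rfl _ _ hb' hredsc
  rw [hword_cons, hword_cons, e1, e2, hword_cons, hword_cons, ← mul_assoc, ← mul_assoc,
    hpi_comm hfar]

end StmtAux
namespace StmtAux
open Finset

variable {n : ℕ}

lemma perm_inv_mul (g τ : SG n) (x : Fin (n+1)) (hg : g⁻¹ = g) :
    (g * τ)⁻¹ x = τ⁻¹ (g x) := by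
  rw [mul_inv_rev, hg, Equiv.Perm.mul_apply]

lemma matsumoto_aux_adj {m : ℕ}
    (ih : ∀ k, k < m → ∀ σ : SG n, len σ = k → ∀ a b, IsReducedWord a σ →
      IsReducedWord b σ → hword a = hword b)
    {σ : SG n} {s t : Fin n} {a' b' : List (Fin n)} (hm : len σ = m)
    (hds : σ⁻¹ s.succ < σ⁻¹ s.castSucc) (hdt : σ⁻¹ t.succ < σ⁻¹ t.castSucc)
    (hadj : (s:ℕ)+1 = t)
    (ha' : IsReducedWord a' (sgen s * σ)) (hb' : IsReducedWord b' (sgen t * σ)) :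
    hword (s :: a') = hword (t :: b') := by
  have hts : t.castSucc = s.succ := by
    rw [Fin.ext_iff]
    simp [← hadj]
  have hsfix : sgen s t.succ = t.succ :=
    sgen_apply_ne s (by simp [Fin.ext_iff]; omega) (by simp [Fin.ext_iff]; omega)
  have htfixc : sgen t s.castSucc = s.castSucc :=
    sgen_apply_ne t (by simp [Fin.ext_iff]; omega) (by simp [Fin.ext_iff]; omega)
  have hssucc : sgen s s.succ = s.castSucc := Equiv.swap_apply_right _ _
  have hscast : sgen s s.castSucc = s.succ := Equiv.swap_apply_left _ _
  have htcast : sgen t t.castSucc = t.succ := Equiv.swap_apply_left _ _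
  have htsucc : sgen t t.succ = t.castSucc := Equiv.swap_apply_right _ _
  have hP : σ⁻¹ t.succ < σ⁻¹ s.succ := by rw [← hts]; exact hdt
  have hdts : (sgen s * σ)⁻¹ t.succ < (sgen s * σ)⁻¹ t.castSucc := by
    have e1 : (sgen s * σ)⁻¹ t.succ = σ⁻¹ t.succ := by
      rw [perm_inv_mul _ _ _ (sgen_inv s), hsfix]
    have e2 : (sgen s * σ)⁻¹ t.castSucc = σ⁻¹ s.castSucc := by
      rw [perm_inv_mul _ _ _ (sgen_inv s), hts, hssucc]
    rw [e1, e2]; exact hP.trans hds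
  have hdst' : (sgen t * (sgen s * σ))⁻¹ s.succ < (sgen t * (sgen s * σ))⁻¹ s.castSucc := by
    have e1 : (sgen t * (sgen s * σ))⁻¹ s.succ = σ⁻¹ t.succ := by
      rw [perm_inv_mul _ _ _ (sgen_inv t), ← hts, htcast,
        perm_inv_mul _ _ _ (sgen_inv s), hsfix]
    have e2 : (sgen t * (sgen s * σ))⁻¹ s.castSucc = σ⁻¹ s.succ := by
      rw [perm_inv_mul _ _ _ (sgen_inv t), htfixc,
        perm_inv_mul _ _ _ (sgen_inv s), hscast]
    rw [e1, e2]; exact hP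
  have hdst : (sgen t * σ)⁻¹ s.succ < (sgen t * σ)⁻¹ s.castSucc := by
    have e1 : (sgen t * σ)⁻¹ s.succ = σ⁻¹ t.succ := by
      rw [perm_inv_mul _ _ _ (sgen_inv t), ← hts, htcast]
    have e2 : (sgen t * σ)⁻¹ s.castSucc = σ⁻¹ s.castSucc := by
      rw [perm_inv_mul _ _ _ (sgen_inv t), htfixc]
    rw [e1, e2]; exact hP.trans hds
  have hdts' : (sgen s * (sgen t * σ))⁻¹ t.succ < (sgen s * (sgen t * σ))⁻¹ t.castSucc := by
    have e1 : (sgen s * (sgen t * σ))⁻¹ t.succ = σ⁻¹ s.succ := by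
      rw [perm_inv_mul _ _ _ (sgen_inv s), hsfix,
        perm_inv_mul _ _ _ (sgen_inv t), htsucc, hts]
    have e2 : (sgen s * (sgen t * σ))⁻¹ t.castSucc = σ⁻¹ s.castSucc := by
      rw [perm_inv_mul _ _ _ (sgen_inv s), hts, hssucc,
        perm_inv_mul _ _ _ (sgen_inv t), htfixc]
    rw [e1, e2]; exact hds
  -- lengths
  have hlens : len (sgen s * σ) + 1 = len σ := descent_cancel hds
  have hlent : len (sgen t * σ) + 1 = len σ := descent_cancel hdt
  have hlen2 : len (sgen t * (sgen s * σ)) + 1 = len (sgen s * σ) := descent_cancel hdts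
  have hlen2b : len (sgen s * (sgen t * σ)) + 1 = len (sgen t * σ) := descent_cancel hdst
  set v : SG n := sgen s * (sgen t * (sgen s * σ)) with hv
  have hlenv : len v + 1 = len (sgen t * (sgen s * σ)) := descent_cancel hdst'
  have hb3 : v = sgen t * (sgen s * (sgen t * σ)) := by
    rw [hv, ← mul_assoc, ← mul_assoc, sgen_braid hadj, mul_assoc, mul_assoc]
  have hlenvb : len v + 1 = len (sgen s * (sgen t * σ)) := by
    rw [hb3]
    exact descent_cancel hdts'
  obtain ⟨c, hc⟩ := exists_reduced_word v
  -- a side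
  have hsv : sgen s * v = sgen t * (sgen s * σ) := by
    rw [hv, ← mul_assoc, sgen_sq, one_mul]
  have hred1 : IsReducedWord (s :: c) (sgen t * (sgen s * σ)) := by
    have := red_cons hc (by rw [hsv]; omega)
    rwa [hsv] at this
  have htv2 : sgen t * (sgen t * (sgen s * σ)) = sgen s * σ := by
    rw [← mul_assoc, sgen_sq, one_mul]
  have hred2 : IsReducedWord (t :: s :: c) (sgen s * σ) := by
    have := red_cons hred1 (by rw [htv2]; omega)
    rwa [htv2] at this
  -- b side
  have htvb : sgen t * v = sgen s * (sgen t * σ) := by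
    rw [hb3, ← mul_assoc, sgen_sq, one_mul]
  have hred1b : IsReducedWord (t :: c) (sgen s * (sgen t * σ)) := by
    have := red_cons hc (by rw [htvb]; omega)
    rwa [htvb] at this
  have hsv2b : sgen s * (sgen s * (sgen t * σ)) = sgen t * σ := by
    rw [← mul_assoc, sgen_sq, one_mul]
  have hred2b : IsReducedWord (s :: t :: c) (sgen t * σ) := by
    have := red_cons hred1b (by rw [hsv2b]; omega)
    rwa [hsv2b] at this
  have e1 : hword a' = hword (t :: s :: c) :=
    ih (len (sgen s * σ)) (by omega) _ rfl _ _ ha' hred2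
  have e2 : hword b' = hword (s :: t :: c) :=
    ih (len (sgen t * σ)) (by omega) _ rfl _ _ hb' hred2b
  rw [hword_cons, hword_cons, e1, e2]
  simp only [hword_cons]
  rw [← mul_assoc, ← mul_assoc, ← mul_assoc, ← mul_assoc, hpi_braid hadj]

theorem matsumoto : ∀ (m : ℕ) (σ : SG n), len σ = m → ∀ a b, IsReducedWord a σ →
    IsReducedWord b σ → hword a = hword b := by
  intro m
  induction m using Nat.strong_induction_on with
  | _ m ih =>
    intro σ hm a b ha hb
    match a, b with
    | [], [] => rfl
    | [], t :: b' =>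
      exfalso
      have h1 := ha.2
      have h2 := hb.2
      simp at h1 h2
      omega
    | s :: a', [] =>
      exfalso
      have h1 := ha.2
      have h2 := hb.2
      simp at h1 h2
      omega
    | s :: a', t :: b' =>
      obtain ⟨hared, haeq, halen⟩ := reduced_cons ha
      obtain ⟨hbred, hbeq, hblen⟩ := reduced_cons hb
      have ha' : IsReducedWord a' (sgen s * σ) := by
        rw [haeq, ← mul_assoc, sgen_sq, one_mul]
        exact hared
      have hb' : IsReducedWord b' (sgen t * σ) := by
        rw [hbeq, ← mul_assoc, sgen_sq, one_mul]
        exact hbred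
      by_cases hst : s = t
      · subst hst
        rw [hword_cons, hword_cons]
        congr 1
        exact ih (len (sgen s * σ))
          (by rw [show sgen s * σ = (a'.map sgen).prod from by
                rw [haeq, ← mul_assoc, sgen_sq, one_mul]]; omega)
          _ rfl _ _ ha' hb'
      · have hds := descent_of_red_cons ha
        have hdt := descent_of_red_cons hb
        have hstv : (s:ℕ) ≠ (t:ℕ) := fun hc => hst (Fin.ext hc)
        rcases Nat.lt_or_ge (s:ℕ) (t:ℕ) with hlt | hge
        · rcases Nat.lt_or_ge ((s:ℕ)+1) (t:ℕ) with h2 | h2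
          · exact matsumoto_aux_far ih hm hds hdt (by omega) ha' hb'
          · exact matsumoto_aux_adj ih hm hds hdt (by omega) ha' hb'
        · rcases Nat.lt_or_ge ((t:ℕ)+1) (s:ℕ) with h2 | h2
          · exact (matsumoto_aux_far ih hm hdt hds (by omega) hb' ha').symm
          · exact (matsumoto_aux_adj ih hm hdt hds (by omega) hb' ha').symm

lemma hword_eq_piPerm {l : List (Fin n)} {σ : SG n} (h : IsReducedWord l σ) :
    hword l = piPerm σ := by
  unfold piPerm
  rw [dif_pos ⟨l, h⟩]
  exact matsumoto (len σ) σ rfl l _ h (Exists.choose_spec (⟨l, h⟩ : ∃ l, IsReducedWord l σ))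

end StmtAux
namespace StmtAux
open Finset

variable {n : ℕ}

/-- product of `π̄` generators along a word -/
def hbarword (l : List (Fin n)) : Hecke n := (l.map hpibar).prod

@[simp] lemma hbarword_nil : hbarword ([] : List (Fin n)) = 1 := rfl

@[simp] lemma hbarword_cons (i : Fin n) (l : List (Fin n)) :
    hbarword (i :: l) = hpibar i * hbarword l := by simp [hbarword]

lemma hpi_mul_hpibar (i : Fin n) : hpi i * hpibar i = 0 := by
  rw [hpibar, mul_sub, mul_one, hpi_idem, sub_self]

lemma ascent_add_right {σ : SG n} {i : Fin n} (h : σ i.castSucc < σ i.succ) :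
    len (σ * sgen i) = len σ + 1 := by
  rcases len_mul_sgen σ i with ⟨_, h'⟩ | ⟨h', _⟩
  · exact h'
  · exact absurd (h.trans h') (lt_irrefl _)

lemma descent_cancel_right {σ : SG n} {i : Fin n} (h : σ i.succ < σ i.castSucc) :
    len (σ * sgen i) + 1 = len σ := by
  rcases len_mul_sgen σ i with ⟨h', _⟩ | ⟨_, h'⟩
  · exact absurd (h.trans h') (lt_irrefl _)
  · omega

theorem prod_eq_zero : ∀ (m : ℕ) (ρ : SG n), len ρ = m → ∀ (σ : SG n) a b,
    IsReducedWord a σ → IsReducedWord b ρ → len (σ * ρ) ≠ len σ + len ρ →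
    hword a * hbarword b = 0 := by
  intro m
  induction m using Nat.strong_induction_on with
  | _ m ih =>
    intro ρ hm σ a b ha hb hne
    match b with
    | [] =>
      exfalso
      have h1 : ρ = 1 := hb.1.symm
      rw [h1, mul_one, len_one] at hne
      omega
    | i :: b' =>
      obtain ⟨hbred, hbeq, hblen⟩ := reduced_cons hb
      set ρ' : SG n := (b'.map sgen).prod with hρ'
      rcases lt_or_gt_of_ne (fun hc : σ i.castSucc = σ i.succ =>
        (Fin.castSucc_lt_succ (i := i)).ne (σ.injective hc)) with hasc | hdesc
      · -- ascent on the right of σ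
        have hlen1 : len (σ * sgen i) = len σ + 1 := ascent_add_right hasc
        have ha2 : IsReducedWord (a ++ [i]) (σ * sgen i) := reduced_append ha hlen1
        have key : hword a * hbarword (i :: b') =
            hword (a ++ [i]) * hbarword b' - hword a * hbarword b' := by
          rw [hbarword_cons, hword_append, hpibar, sub_mul, one_mul, mul_sub, mul_assoc]
          simp [hword]
        rw [key]
        have hρeq : σ * ρ = (σ * sgen i) * ρ' := by
          rw [hbeq, mul_assoc]
        have hz1 : hword (a ++ [i]) * hbarword b' = 0 := by
          refine ih (len ρ') (by omega) ρ' rfl (σ * sgen i) _ _ ha2 hbred ?_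
          rw [← hρeq, hlen1]
          intro hc
          rw [hc] at hne
          omega
        have hz2 : hword a * hbarword b' = 0 := by
          refine ih (len ρ') (by omega) ρ' rfl σ _ _ ha hbred ?_
          intro hadd
          apply hne
          have hascL : ρ'⁻¹ i.castSucc < ρ'⁻¹ i.succ := by
            rcases len_sgen_mul ρ' i with ⟨h', _⟩ | ⟨_, h'⟩
            · exact h'
            · rw [← hbeq] at h'; omega
          have := lifting hadd hasc hascL
          rw [← hbeq] at this
          exact this
        rw [hz1, hz2, sub_zero]
      · -- descent: choose a reduced word of σ ending in i
        have hlen1 : len (σ * sgen i) + 1 = len σ := descent_cancel_right hdesc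
        obtain ⟨c, hc⟩ := exists_reduced_word (σ * sgen i)
        have hback : (σ * sgen i) * sgen i = σ := by
          rw [mul_assoc, sgen_sq, mul_one]
        have hc2 : IsReducedWord (c ++ [i]) σ := by
          have := reduced_append hc (by rw [hback]; omega)
          rwa [hback] at this
        have heq : hword a = hword (c ++ [i]) := matsumoto (len σ) σ rfl _ _ ha hc2
        rw [heq, hword_append, hbarword_cons]
        have : hword [i] * (hpibar i * hbarword b') = 0 := by
          rw [show hword [i] = hpi i from by simp [hword], ← mul_assoc, hpi_mul_hpibar,
            zero_mul]
        rw [mul_assoc, this, mul_zero]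

lemma zero_of_not_add {σ ρ : SG n} (hne : len (σ * ρ) ≠ len σ + len ρ) :
    piPerm σ * pibarPerm ρ = 0 := by
  have ha := exists_reduced_word σ
  have hb := exists_reduced_word ρ
  rw [piPerm, pibarPerm, dif_pos ha, dif_pos hb]
  exact prod_eq_zero (len ρ) ρ rfl σ _ _ ha.choose_spec hb.choose_spec hne

end StmtAux
namespace StmtAux
open Finset

variable {n : ℕ}

def fL (i : Fin n) (w : SG n) : SG n :=
  if w⁻¹ i.castSucc < w⁻¹ i.succ then sgen i * w else w

lemma fL_of_lt {i : Fin n} {w : SG n} (h : w⁻¹ i.castSucc < w⁻¹ i.succ) :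
    fL i w = sgen i * w := if_pos h

lemma fL_of_gt {i : Fin n} {w : SG n} (h : w⁻¹ i.succ < w⁻¹ i.castSucc) :
    fL i w = w := if_neg (by exact fun hc => absurd (h.trans hc) (lt_irrefl _))

lemma pos_trichotomy (w : SG n) {x y : Fin (n+1)} (hxy : x ≠ y) :
    w⁻¹ x < w⁻¹ y ∨ w⁻¹ y < w⁻¹ x := by
  rcases lt_or_gt_of_ne (fun hc : w⁻¹ x = w⁻¹ y => hxy (w⁻¹.injective hc)) with h | h
  · exact Or.inl h
  · exact Or.inr h

lemma pos_smul (k : Fin n) (w : SG n) (x : Fin (n+1)) :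
    (sgen k * w)⁻¹ x = w⁻¹ (sgen k x) := perm_inv_mul _ _ _ (sgen_inv k)

lemma len_fL_le (i : Fin n) (w : SG n) : len (fL i w) ≤ len w + 1 := by
  unfold fL
  split_ifs with h
  · rcases len_sgen_mul w i with ⟨_, h'⟩ | ⟨_, h'⟩ <;> omega
  · omega

lemma fL_idem (i : Fin n) (w : SG n) : fL i (fL i w) = fL i w := by
  rcases pos_trichotomy w (x := i.castSucc) (y := i.succ)
      (by simp [Fin.ext_iff]) with h | h
  · rw [fL_of_lt h]
    apply fL_of_gt
    rw [pos_smul, pos_smul, show sgen i i.succ = i.castSucc from Equiv.swap_apply_right _ _,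
      show sgen i i.castSucc = i.succ from Equiv.swap_apply_left _ _]
    exact h
  · rw [fL_of_gt h, fL_of_gt h]

lemma fL_comm {s t : Fin n} (h : (s:ℕ)+2 ≤ t) (w : SG n) :
    fL s (fL t w) = fL t (fL s w) := by
  have hfix1 : sgen t s.castSucc = s.castSucc :=
    sgen_apply_ne t (by simp [Fin.ext_iff]; omega) (by simp [Fin.ext_iff]; omega)
  have hfix2 : sgen t s.succ = s.succ :=
    sgen_apply_ne t (by simp [Fin.ext_iff]; omega) (by simp [Fin.ext_iff]; omega)
  have hfix3 : sgen s t.castSucc = t.castSucc :=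
    sgen_apply_ne s (by simp [Fin.ext_iff]; omega) (by simp [Fin.ext_iff]; omega)
  have hfix4 : sgen s t.succ = t.succ :=
    sgen_apply_ne s (by simp [Fin.ext_iff]; omega) (by simp [Fin.ext_iff]; omega)
  rcases pos_trichotomy w (x := s.castSucc) (y := s.succ) (by simp [Fin.ext_iff]) with hs | hs <;>
    rcases pos_trichotomy w (x := t.castSucc) (y := t.succ) (by simp [Fin.ext_iff]) with ht | ht
  · have cst : (sgen t * w)⁻¹ s.castSucc < (sgen t * w)⁻¹ s.succ := by
      simp only [pos_smul, hfix1, hfix2]; exact hs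
    have cts : (sgen s * w)⁻¹ t.castSucc < (sgen s * w)⁻¹ t.succ := by
      simp only [pos_smul, hfix3, hfix4]; exact ht
    rw [fL_of_lt ht, fL_of_lt hs, fL_of_lt cst, fL_of_lt cts,
      ← mul_assoc, ← mul_assoc, sgen_mul_comm h]
  · have cts : (sgen s * w)⁻¹ t.succ < (sgen s * w)⁻¹ t.castSucc := by
      simp only [pos_smul, hfix3, hfix4]; exact ht
    rw [fL_of_gt ht, fL_of_lt hs, fL_of_gt cts]
  · have cst : (sgen t * w)⁻¹ s.succ < (sgen t * w)⁻¹ s.castSucc := by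
      simp only [pos_smul, hfix1, hfix2]; exact hs
    rw [fL_of_lt ht, fL_of_gt hs, fL_of_gt cst, fL_of_lt ht]
  · rw [fL_of_gt ht, fL_of_gt hs, fL_of_gt ht]

lemma fL_braid {s t : Fin n} (h : (s:ℕ)+1 = t) (w : SG n) :
    fL s (fL t (fL s w)) = fL t (fL s (fL t w)) := by
  have hts : t.castSucc = s.succ := by rw [Fin.ext_iff]; simp [← h]
  have hsfix : sgen s t.succ = t.succ :=
    sgen_apply_ne s (by simp [Fin.ext_iff]; omega) (by simp [Fin.ext_iff]; omega)
  have htfixc : sgen t s.castSucc = s.castSucc :=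
    sgen_apply_ne t (by simp [Fin.ext_iff]; omega) (by simp [Fin.ext_iff]; omega)
  have hssucc : sgen s s.succ = s.castSucc := Equiv.swap_apply_right _ _
  have hscast : sgen s s.castSucc = s.succ := Equiv.swap_apply_left _ _
  have htcast : sgen t t.castSucc = t.succ := Equiv.swap_apply_left _ _
  have hA : sgen s t.castSucc = s.castSucc := by rw [hts, hssucc]
  have hB : sgen t s.succ = t.succ := by rw [← hts, htcast]
  have hC : sgen t t.succ = s.succ := by rw [← hts]; exact Equiv.swap_apply_right _ _
  have hne01 : (s.castSucc : Fin (n+1)) ≠ s.succ := by simp [Fin.ext_iff]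
  have hne12 : (t.castSucc : Fin (n+1)) ≠ t.succ := by simp [Fin.ext_iff]
  have hne02 : (s.castSucc : Fin (n+1)) ≠ t.succ := by simp [Fin.ext_iff]; omega
  rcases pos_trichotomy w hne01 with h01 | h01 <;>
    rcases pos_trichotomy w hne12 with h12 | h12 <;>
    rcases pos_trichotomy w hne02 with h02 | h02
  · -- P0<P1, P1<P2, P0<P2 : sts w = tst w
    have h12' : w⁻¹ s.succ < w⁻¹ t.succ := by rw [← hts]; exact h12
    have e1 : fL s w = sgen s * w := fL_of_lt h01
    have c2 : (sgen s * w)⁻¹ t.castSucc < (sgen s * w)⁻¹ t.succ := by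
      simp only [pos_smul, hA, hsfix]; exact h02
    have c3 : (sgen t * (sgen s * w))⁻¹ s.castSucc < (sgen t * (sgen s * w))⁻¹ s.succ := by
      simp only [pos_smul, htfixc, hB, hscast, hsfix]; exact h12'
    have e4 : fL t w = sgen t * w := fL_of_lt h12
    have c5 : (sgen t * w)⁻¹ s.castSucc < (sgen t * w)⁻¹ s.succ := by
      simp only [pos_smul, htfixc, hB]; exact h02
    have c6 : (sgen s * (sgen t * w))⁻¹ t.castSucc < (sgen s * (sgen t * w))⁻¹ t.succ := by
      simp only [pos_smul, hA, hsfix, htfixc, hC]; exact h01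
    rw [e1, fL_of_lt c2, fL_of_lt c3, e4, fL_of_lt c5, fL_of_lt c6,
      ← mul_assoc, ← mul_assoc, ← mul_assoc, ← mul_assoc, sgen_braid h]
  · -- P0<P1, P1<P2, P2<P0 : impossible
    exact absurd ((by rw [← hts]; exact h12 : w⁻¹ s.succ < w⁻¹ t.succ).trans h02)
      (lt_asymm h01)
  · -- P0<P1, P2<P1, P0<P2 : both t s w
    have h12' : w⁻¹ t.succ < w⁻¹ s.succ := by rw [← hts]; exact h12
    have e1 : fL s w = sgen s * w := fL_of_lt h01
    have c2 : (sgen s * w)⁻¹ t.castSucc < (sgen s * w)⁻¹ t.succ := by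
      simp only [pos_smul, hA, hsfix]; exact h02
    have c3 : (sgen t * (sgen s * w))⁻¹ s.succ < (sgen t * (sgen s * w))⁻¹ s.castSucc := by
      simp only [pos_smul, htfixc, hB, hscast, hsfix]; exact h12'
    have e4 : fL t w = w := fL_of_gt h12
    rw [e1, fL_of_lt c2, fL_of_gt c3, e4, e1, fL_of_lt c2]
  · -- P0<P1, P2<P1, P2<P0 : both s w
    have e1 : fL s w = sgen s * w := fL_of_lt h01
    have c2 : (sgen s * w)⁻¹ t.succ < (sgen s * w)⁻¹ t.castSucc := by
      simp only [pos_smul, hA, hsfix]; exact h02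
    have c3 : (sgen s * w)⁻¹ s.succ < (sgen s * w)⁻¹ s.castSucc := by
      simp only [pos_smul, hscast, hssucc]; exact h01
    have e4 : fL t w = w := fL_of_gt h12
    rw [e1, fL_of_gt c2, fL_of_gt c3, e4, e1, fL_of_gt c2]
  · -- P1<P0, P1<P2, P0<P2 : both s t w
    have e1 : fL s w = w := fL_of_gt h01
    have e2 : fL t w = sgen t * w := fL_of_lt h12
    have c3 : (sgen t * w)⁻¹ s.castSucc < (sgen t * w)⁻¹ s.succ := by
      simp only [pos_smul, htfixc, hB]; exact h02
    have c4 : (sgen s * (sgen t * w))⁻¹ t.succ < (sgen s * (sgen t * w))⁻¹ t.castSucc := by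
      simp only [pos_smul, hA, hsfix, htfixc, hC]; exact h01
    rw [e1, e2, fL_of_lt c3, fL_of_gt c4]
  · -- P1<P0, P1<P2, P2<P0 : both t w
    have e1 : fL s w = w := fL_of_gt h01
    have e2 : fL t w = sgen t * w := fL_of_lt h12
    have c3 : (sgen t * w)⁻¹ s.succ < (sgen t * w)⁻¹ s.castSucc := by
      simp only [pos_smul, htfixc, hB]; exact h02
    have c4 : (sgen t * w)⁻¹ t.succ < (sgen t * w)⁻¹ t.castSucc := by
      simp only [pos_smul, htcast, hC]
      rw [← hts]; exact h12
    rw [e1, e2, fL_of_gt c3, fL_of_gt c4]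
  · -- P1<P0, P2<P1, P0<P2 : impossible
    have h12' : w⁻¹ t.succ < w⁻¹ s.succ := by rw [← hts]; exact h12
    exact absurd (h12'.trans h01) (lt_asymm h02)
  · -- P1<P0, P2<P1, P2<P0 : both w
    have e1 : fL s w = w := fL_of_gt h01
    have e2 : fL t w = w := fL_of_gt h12
    rw [e1, e2, e1, e2]

end StmtAux
namespace StmtAux
open Finset

variable {n : ℕ}

abbrev MM (n : ℕ) := SG n →₀ ℂ

def TT (i : Fin n) : MM n →ₗ[ℂ] MM n := Finsupp.lmapDomain ℂ ℂ (fL i)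

lemma TT_single (i : Fin n) (w : SG n) (c : ℂ) :
    TT i (Finsupp.single w c) = Finsupp.single (fL i w) c := by
  simp [TT, Finsupp.mapDomain_single]

def Phi : Hecke n →ₐ[ℂ] Module.End ℂ (MM n) :=
  RingQuot.liftAlgHom ℂ ⟨FreeAlgebra.lift ℂ (fun i => (TT i : Module.End ℂ (MM n))), by
    intro x y hxy
    induction hxy with
    | idem i =>
      simp only [map_mul, FreeAlgebra.lift_ι_apply]
      apply Finsupp.lhom_ext
      intro w c
      simp only [Module.End.mul_apply, TT_single, fL_idem]
    | braid i j hij =>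
      simp only [map_mul, FreeAlgebra.lift_ι_apply]
      apply Finsupp.lhom_ext
      intro w c
      simp only [Module.End.mul_apply, TT_single]
      rw [fL_braid hij]
    | comm i j hij =>
      simp only [map_mul, FreeAlgebra.lift_ι_apply]
      apply Finsupp.lhom_ext
      intro w c
      simp only [Module.End.mul_apply, TT_single]
      rw [fL_comm hij]⟩

lemma Phi_hpi (i : Fin n) : Phi (hpi i) = TT i := by
  rw [hpi, Phi, RingQuot.liftAlgHom_mkAlgHom_apply, FreeAlgebra.lift_ι_apply]

def Bnd (m : ℕ) (v : MM n) : Prop := ∀ γ : SG n, m < len γ → v γ = 0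

lemma Bnd_mono {m m' : ℕ} (h : m ≤ m') {v : MM n} (hv : Bnd m v) : Bnd m' v :=
  fun γ hγ => hv γ (lt_of_le_of_lt h hγ)

lemma Bnd_TT {m : ℕ} {v : MM n} {i : Fin n} (hv : Bnd m v) : Bnd (m+1) (TT i v) := by
  intro γ hγ
  by_cases hmem : γ ∈ (TT i v).support
  · exfalso
    have h1 : (TT i v) = Finsupp.mapDomain (fL i) v := by simp [TT]
    rw [h1] at hmem
    have h2 := Finsupp.mapDomain_support hmem
    rw [Finset.mem_image] at h2
    obtain ⟨w, hw, rfl⟩ := h2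
    have h3 : v w ≠ 0 := Finsupp.mem_support_iff.mp hw
    have h4 : len w ≤ m := by
      by_contra hc
      exact h3 (hv w (by omega))
    have := len_fL_le i w
    omega
  · exact Finsupp.notMem_support_iff.mp hmem

lemma Bnd_sub {m : ℕ} {v u : MM n} (hv : Bnd m v) (hu : Bnd m u) : Bnd m (v - u) := by
  intro γ hγ
  rw [Finsupp.sub_apply, hv γ hγ, hu γ hγ, sub_zero]

lemma Bnd_e1 : Bnd 0 (Finsupp.single (1 : SG n) 1) := by
  intro γ hγ
  apply Finsupp.single_eq_of_ne
  intro hc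
  rw [hc, len_one] at hγ
  omega

lemma Bnd_hbar : ∀ (b : List (Fin n)) (v : MM n) (m : ℕ), Bnd m v →
    Bnd (m + b.length) (Phi (hbarword b) v) := by
  intro b
  induction b with
  | nil =>
    intro v m hv
    simpa [hbarword_nil, map_one, Module.End.one_apply] using hv
  | cons i b' ih =>
    intro v m hv
    rw [hbarword_cons, map_mul]
    have h1 : Phi (hpibar (n := n) i) = TT i - 1 := by
      rw [hpibar, map_sub, map_one, Phi_hpi]
    rw [Module.End.mul_apply, h1]
    have h2 := ih v m hv
    have h3 : (TT i - 1 : Module.End ℂ (MM n)) (Phi (hbarword b') v) =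
        TT i (Phi (hbarword b') v) - Phi (hbarword b') v := by
      simp [LinearMap.sub_apply]
    rw [h3]
    have h4 : Bnd (m + b'.length + 1) (TT i (Phi (hbarword b') v)) := Bnd_TT h2
    have h5 : Bnd (m + b'.length + 1) (Phi (hbarword b') v) := Bnd_mono (by omega) h2
    have heq : m + (i :: b').length = m + b'.length + 1 := by
      simp only [List.length_cons]
      omega
    rw [heq]
    exact Bnd_sub h4 h5

lemma Bnd_hword : ∀ (a : List (Fin n)) (v : MM n) (m : ℕ), Bnd m v →
    Bnd (m + a.length) (Phi (hword a) v) := by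
  intro a
  induction a with
  | nil =>
    intro v m hv
    simpa [hword_nil, map_one, Module.End.one_apply] using hv
  | cons i a' ih =>
    intro v m hv
    rw [hword_cons, map_mul, Module.End.mul_apply, Phi_hpi]
    have h4 : Bnd (m + a'.length + 1) (TT i (Phi (hword a') v)) := Bnd_TT (ih v m hv)
    have heq : m + (i :: a').length = m + a'.length + 1 := by
      simp only [List.length_cons]
      omega
    rw [heq]
    exact h4

lemma Phi_hword_single : ∀ (a : List (Fin n)) (σ : SG n), IsReducedWord a σ →
    ∀ ρ : SG n, len (σ * ρ) = len σ + len ρ →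
    Phi (hword a) (Finsupp.single ρ 1) = Finsupp.single (σ * ρ) 1 := by
  intro a
  induction a with
  | nil =>
    intro σ ha ρ _
    have hσ : σ = 1 := ha.1.symm
    subst hσ
    simp [hword_nil, map_one, Module.End.one_apply]
  | cons i t ih =>
    intro σ ha ρ hadd
    obtain ⟨hred, heq, hlen⟩ := reduced_cons ha
    set τ : SG n := (t.map sgen).prod with hτdef
    have hσρ : sgen i * (τ * ρ) = σ * ρ := by
      rw [heq, mul_assoc]
    have haddτ : len (τ * ρ) = len τ + len ρ := by
      have hle := len_mul_le τ ρ
      rcases len_sgen_mul (τ * ρ) i with ⟨_, h'⟩ | ⟨_, h'⟩ <;> rw [hσρ] at h' <;> omega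
    have hasc : (τ * ρ)⁻¹ i.castSucc < (τ * ρ)⁻¹ i.succ := by
      rcases len_sgen_mul (τ * ρ) i with ⟨h', _⟩ | ⟨_, h'⟩
      · exact h'
      · rw [hσρ] at h'; omega
    rw [hword_cons, map_mul, Module.End.mul_apply, ih τ hred ρ haddτ, Phi_hpi, TT_single,
      fL_of_lt hasc, hσρ]

lemma coeff_one : ∀ (b : List (Fin n)) (ρ : SG n), IsReducedWord b ρ →
    ∀ (σ : SG n) (a : List (Fin n)), IsReducedWord a σ → len (σ * ρ) = len σ + len ρ →
    (Phi (hword a * hbarword b) (Finsupp.single 1 1)) (σ * ρ) = 1 := by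
  intro b
  induction b with
  | nil =>
    intro ρ hb σ a ha _
    have hρ : ρ = 1 := hb.1.symm
    subst hρ
    rw [hbarword_nil, mul_one, Phi_hword_single a σ ha 1 (by simp [len_one])]
    simp
  | cons i b' ih =>
    intro ρ hb σ a ha hadd
    obtain ⟨hbred, hbeq, hblen⟩ := reduced_cons hb
    set ρ' : SG n := (b'.map sgen).prod with hρ'def
    have hσρ : (σ * sgen i) * ρ' = σ * ρ := by
      rw [hbeq, mul_assoc]
    have hlen1 : len (σ * sgen i) = len σ + 1 := by
      have hle := len_mul_le (σ * sgen i) ρ'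
      rw [hσρ] at hle
      rcases len_mul_sgen σ i with ⟨_, h'⟩ | ⟨_, h'⟩ <;> omega
    have ha2 : IsReducedWord (a ++ [i]) (σ * sgen i) := reduced_append ha hlen1
    have hadd2 : len ((σ * sgen i) * ρ') = len (σ * sgen i) + len ρ' := by
      rw [hσρ, hlen1]; omega
    have key : hword a * hbarword (i :: b') =
        hword (a ++ [i]) * hbarword b' - hword a * hbarword b' := by
      rw [hbarword_cons, hword_append, hpibar, sub_mul, one_mul, mul_sub, mul_assoc]
      simp [hword]
    rw [key, map_sub]
    have hterm1 : (Phi (hword (a ++ [i]) * hbarword b') (Finsupp.single 1 1)) (σ * ρ) = 1 := by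
      rw [← hσρ]
      exact ih ρ' hbred (σ * sgen i) (a ++ [i]) ha2 hadd2
    have hterm2 : (Phi (hword a * hbarword b') (Finsupp.single 1 1)) (σ * ρ) = 0 := by
      have hB : Bnd (0 + b'.length + a.length)
          (Phi (hword a) (Phi (hbarword b') (Finsupp.single 1 1))) :=
        Bnd_hword a _ _ (Bnd_hbar b' _ 0 Bnd_e1)
      have hsplit : Phi (hword a * hbarword b') (Finsupp.single (1 : SG n) 1) =
          Phi (hword a) (Phi (hbarword b') (Finsupp.single 1 1)) := by
        rw [map_mul, Module.End.mul_apply]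
      rw [hsplit]
      apply hB
      rw [ha.2, hbred.2, hadd, hblen]
      omega
    rw [LinearMap.sub_apply, Finsupp.sub_apply, hterm1, hterm2, sub_zero]

lemma nonzero_of_add {σ ρ : SG n} (hadd : len (σ * ρ) = len σ + len ρ) :
    piPerm σ * pibarPerm ρ ≠ 0 := by
  intro hzero
  have ha := exists_reduced_word σ
  have hb := exists_reduced_word ρ
  rw [piPerm, pibarPerm, dif_pos ha, dif_pos hb] at hzero
  have hco := coeff_one hb.choose ρ hb.choose_spec σ ha.choose ha.choose_spec hadd
  rw [show (ha.choose.map hpi).prod = hword ha.choose from rfl,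
    show (hb.choose.map hpibar).prod = hbarword hb.choose from rfl] at hzero
  rw [hzero] at hco
  simp at hco

end StmtAux

/-- `π_σ π̄_ρ ≠ 0` iff `ℓ(σρ) = ℓ(σ) + ℓ(ρ)`. -/
theorem stmt0 (n : ℕ) (σ ρ : SG n) :
    piPerm σ * pibarPerm ρ ≠ 0 ↔ len (σ * ρ) = len σ + len ρ := by
  constructor
  · intro h
    by_contra hc
    exact h (StmtAux.zero_of_not_add hc)
  · exact StmtAux.nonzero_of_add

end
end

section
/- For permutations σ, ρ in S_n with ℓ(σρ) = ℓ(σ) + ℓ(ρ), when π_σ π̄_ρ is expanded in the basis {π_γ : γ ∈ S_n} of H_n(0), the element σρ is the unique element of maximal length among those γ for which π_γ appears with nonzero coefficient; moreover the coefficient of π_{σρ} is 1. -/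
open scoped Classical

noncomputable section

-- ===== Part A : length combinatorics =====

lemma sgen_castSucc {n : ℕ} (i : Fin n) : sgen i i.castSucc = i.succ := by
  simp [sgen]

lemma sgen_succ {n : ℕ} (i : Fin n) : sgen i i.succ = i.castSucc := by
  simp [sgen]

lemma cs_lt_succ {n : ℕ} (i : Fin n) : i.castSucc < i.succ := Fin.castSucc_lt_succ

lemma swap_succ_lt {n : ℕ} (i : Fin n) {a b : Fin (n+1)} (hab : a < b)
    (h : ¬(a = i.castSucc ∧ b = i.succ)) :
    sgen i a < sgen i b := by
  have hps : (i.succ : ℕ) = (i.castSucc : ℕ) + 1 := by simp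
  unfold sgen
  rw [Fin.lt_def, Equiv.swap_apply_def, Equiv.swap_apply_def]
  simp only [Fin.lt_def] at hab
  simp only [not_and, Fin.ext_iff] at h
  split_ifs <;> simp only [Fin.ext_iff, Fin.val_fin_lt] at * <;> omega

def InvSet {n : ℕ} (σ : SG n) : Finset (Fin (n+1) × Fin (n+1)) :=
  Finset.univ.filter fun p => p.1 < p.2 ∧ σ p.2 < σ p.1

lemma len_eq_card {n : ℕ} (σ : SG n) : len σ = (InvSet σ).card := rfl

lemma invSet_sgen_mul {n : ℕ} (i : Fin n) (σ : SG n)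
    (h : σ⁻¹ i.castSucc < σ⁻¹ i.succ) :
    InvSet (sgen i * σ) = insert (σ⁻¹ i.castSucc, σ⁻¹ i.succ) (InvSet σ) := by
  ext p
  rw [InvSet, InvSet, Finset.mem_insert, Finset.mem_filter, Finset.mem_filter]
  simp only [InvSet, Finset.mem_insert, Finset.mem_filter, Finset.mem_univ, true_and,
    Equiv.Perm.mul_apply]
  constructor
  · rintro ⟨h1, h2⟩
    by_cases hp : p = (σ⁻¹ i.castSucc, σ⁻¹ i.succ)
    · exact Or.inl hp
    · refine Or.inr ⟨h1, ?_⟩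
      by_contra hlt
      have hne : σ p.2 ≠ σ p.1 := fun he => absurd (σ.injective he) (ne_of_gt h1)
      have : σ p.1 < σ p.2 := lt_of_le_of_ne (not_lt.mp hlt) (Ne.symm hne)
      have : sgen i (σ p.1) < sgen i (σ p.2) := by
        apply swap_succ_lt i this
        rintro ⟨e1, e2⟩
        apply hp
        have : p.1 = σ⁻¹ i.castSucc := by rw [← e1]; simp
        have h2' : p.2 = σ⁻¹ i.succ := by rw [← e2]; simp
        exact Prod.ext ‹p.1 = _› h2'
      exact absurd h2 (not_lt.mpr this.le)
  · rintro (rfl | ⟨h1, h2⟩)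
    · refine ⟨h, ?_⟩
      simp [sgen_castSucc, sgen_succ, cs_lt_succ]
    · refine ⟨h1, ?_⟩
      apply swap_succ_lt i h2
      rintro ⟨e1, e2⟩
      have hp2 : p.2 = σ⁻¹ i.castSucc := Equiv.Perm.eq_inv_iff_eq.mpr e1
      have hp1 : p.1 = σ⁻¹ i.succ := Equiv.Perm.eq_inv_iff_eq.mpr e2
      rw [hp1, hp2] at h1
      exact absurd h1 (not_lt.mpr h.le)

lemma len_sgen_mul_of_lt {n : ℕ} (i : Fin n) (σ : SG n)
    (h : σ⁻¹ i.castSucc < σ⁻¹ i.succ) :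
    len (sgen i * σ) = len σ + 1 := by
  rw [len_eq_card, len_eq_card, invSet_sgen_mul i σ h,
    Finset.card_insert_of_notMem]
  simp only [InvSet, Finset.mem_filter, Finset.mem_univ, true_and, not_and]
  intro _
  simp [not_lt, (cs_lt_succ i).le]

lemma sgen_mul_sgen_mul {n : ℕ} (i : Fin n) (σ : SG n) :
    sgen i * (sgen i * σ) = σ := by
  rw [← mul_assoc]
  simp [sgen, Equiv.swap_mul_self]

lemma inv_sgen_mul_castSucc {n : ℕ} (i : Fin n) (σ : SG n) :
    (sgen i * σ)⁻¹ i.castSucc = σ⁻¹ i.succ := by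
  rw [mul_inv_rev, Equiv.Perm.mul_apply]
  congr 1
  simp [sgen, Equiv.swap_inv]

lemma inv_sgen_mul_succ {n : ℕ} (i : Fin n) (σ : SG n) :
    (sgen i * σ)⁻¹ i.succ = σ⁻¹ i.castSucc := by
  rw [mul_inv_rev, Equiv.Perm.mul_apply]
  congr 1
  simp [sgen, Equiv.swap_inv]

lemma len_sgen_mul_of_gt {n : ℕ} (i : Fin n) (σ : SG n)
    (h : σ⁻¹ i.succ < σ⁻¹ i.castSucc) :
    len σ = len (sgen i * σ) + 1 := by
  have := len_sgen_mul_of_lt i (sgen i * σ) (by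
    rw [inv_sgen_mul_castSucc, inv_sgen_mul_succ]; exact h)
  rwa [sgen_mul_sgen_mul] at this

lemma desL_iff {n : ℕ} (i : Fin n) (σ : SG n) :
    i ∈ DesL σ ↔ σ⁻¹ i.succ < σ⁻¹ i.castSucc := by
  constructor
  · intro hd
    rcases lt_trichotomy (σ⁻¹ i.succ) (σ⁻¹ i.castSucc) with hl | he | hg
    · exact hl
    · exact absurd (σ⁻¹.injective he) (by simp [Fin.ext_iff])
    · have := len_sgen_mul_of_lt i σ hg
      simp only [DesL, Set.mem_setOf_eq, this] at hd
      omega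
  · intro hlt
    have := len_sgen_mul_of_gt i σ hlt
    simp only [DesL, Set.mem_setOf_eq]
    omega

lemma len_sgen_mul_of_not_desL {n : ℕ} (i : Fin n) (σ : SG n) (h : i ∉ DesL σ) :
    len (sgen i * σ) = len σ + 1 := by
  rw [desL_iff, not_lt] at h
  apply len_sgen_mul_of_lt
  exact lt_of_le_of_ne h (fun he => by
    exact absurd (σ⁻¹.injective he) (by simp [Fin.ext_iff]))

lemma len_sgen_mul_of_desL {n : ℕ} (i : Fin n) (σ : SG n) (h : i ∈ DesL σ) :
    len σ = len (sgen i * σ) + 1 :=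
  len_sgen_mul_of_gt i σ ((desL_iff i σ).mp h)

lemma len_sgen_mul_le {n : ℕ} (i : Fin n) (σ : SG n) :
    len (sgen i * σ) ≤ len σ + 1 := by
  by_cases h : i ∈ DesL σ
  · have := len_sgen_mul_of_desL i σ h; omega
  · exact (len_sgen_mul_of_not_desL i σ h).le

lemma eq_one_of_len_eq_zero {n : ℕ} (σ : SG n) (h : len σ = 0) : σ = 1 := by
  have hmono : StrictMono σ := by
    intro a b hab
    rcases lt_trichotomy (σ a) (σ b) with hl | he | hg
    · exact hl
    · exact absurd (σ.injective he) (ne_of_lt hab)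
    · exfalso
      have : (a, b) ∈ InvSet σ := by
        simp [InvSet, hab, hg]
      rw [len_eq_card, Finset.card_eq_zero] at h
      simp [h] at this
  have hfe : ⇑σ = id := by
    apply (StrictMono.range_inj hmono strictMono_id).mp
    simp [Set.range_eq_univ.mpr σ.surjective]
  exact Equiv.ext fun x => congrFun hfe x

lemma exists_desL_of_ne_one {n : ℕ} (σ : SG n) (h : σ ≠ 1) : ∃ i, i ∈ DesL σ := by
  by_contra hno
  push_neg at hno
  apply h
  have hsm : StrictMono ⇑(σ⁻¹) := by
    rw [Fin.strictMono_iff_lt_succ]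
    intro i
    have hni := hno i
    rw [desL_iff, not_lt] at hni
    refine lt_of_le_of_ne hni (fun he => ?_)
    exact absurd (σ⁻¹.injective he) (by simp [Fin.ext_iff])
  have hid : ⇑(σ⁻¹) = id := by
    apply (StrictMono.range_inj hsm strictMono_id).mp
    simp [Set.range_eq_univ.mpr (σ⁻¹).surjective]
  have hinv : σ⁻¹ = 1 := Equiv.ext fun x => congrFun hid x
  simpa using congrArg (·⁻¹) hinv

lemma exists_reduced_word_aux {n : ℕ} (k : ℕ) : ∀ σ : SG n, len σ = k → ∃ l, IsReducedWord l σ := by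
  induction k using Nat.strong_induction_on with
  | _ k ih =>
    intro σ hk
    subst hk
    by_cases h1 : σ = 1
    · exact ⟨[], by simp [IsReducedWord, h1, len_one]⟩
    · obtain ⟨i, hi⟩ := exists_desL_of_ne_one σ h1
      have hlen := len_sgen_mul_of_desL i σ hi
      obtain ⟨l, hl1, hl2⟩ := ih (len (sgen i * σ)) (by omega) (sgen i * σ) rfl
      refine ⟨i :: l, ?_, ?_⟩
      · simp only [List.map_cons, List.prod_cons, hl1]
        exact sgen_mul_sgen_mul i σ
      · simp [hl2]; omega

lemma exists_reduced_word {n : ℕ} (σ : SG n) : ∃ l, IsReducedWord l σ :=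
  exists_reduced_word_aux (len σ) σ rfl

-- ===== Part B : the action on the basis and its relations =====

/-- Action of `π_i` on the basis of the regular representation. -/
def A {n : ℕ} (i : Fin n) (γ : SG n) : SG n :=
  if i ∈ DesL γ then γ else sgen i * γ

lemma A_of_gt {n : ℕ} {i : Fin n} {w : SG n} (h : w⁻¹ i.succ < w⁻¹ i.castSucc) :
    A i w = w := by
  rw [A, if_pos ((desL_iff i w).mpr h)]

lemma A_of_lt {n : ℕ} {i : Fin n} {w : SG n} (h : w⁻¹ i.castSucc < w⁻¹ i.succ) :
    A i w = sgen i * w := by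
  rw [A, if_neg]
  rw [desL_iff, not_lt]
  exact h.le

lemma inv_sgen_mul {n : ℕ} (k : Fin n) (w : SG n) (p : Fin (n+1)) :
    (sgen k * w)⁻¹ p = w⁻¹ (sgen k p) := by
  rw [mul_inv_rev, Equiv.Perm.mul_apply]
  simp [sgen, Equiv.swap_inv]

lemma A_ne_desL {n : ℕ} {i : Fin n} {w : SG n} (h : i ∉ DesL w) :
    A i w = sgen i * w := by rw [A, if_neg h]

lemma desL_A {n : ℕ} (i : Fin n) (w : SG n) : i ∈ DesL (A i w) := by
  by_cases h : i ∈ DesL w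
  · rwa [A, if_pos h]
  · rw [A, if_neg h, DesL, Set.mem_setOf_eq, sgen_mul_sgen_mul]
    have := len_sgen_mul_of_not_desL i w h
    omega

lemma A_idem {n : ℕ} (i : Fin n) (γ : SG n) : A i (A i γ) = A i γ := by
  rw [A, if_pos (desL_A i γ)]

lemma len_A {n : ℕ} (i : Fin n) (γ : SG n) : len (A i γ) ≤ len γ + 1 := by
  by_cases h : i ∈ DesL γ
  · rw [A, if_pos h]; omega
  · rw [A, if_neg h, len_sgen_mul_of_not_desL i γ h]

lemma A_of_not_desL_eq {n : ℕ} {i : Fin n} {w : SG n} (h : i ∉ DesL w) :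
    len (A i w) = len w + 1 := by
  rw [A_ne_desL h]; exact len_sgen_mul_of_not_desL i w h

-- distinctness helpers
lemma cs_ne_succ {n : ℕ} (i : Fin n) : i.castSucc ≠ i.succ := (cs_lt_succ i).ne

section Braid
variable {n : ℕ} {i j : Fin n} (hij : (i : ℕ) + 1 = j)

include hij

lemma succ_eq_castSucc : i.succ = j.castSucc := by
  apply Fin.ext; simp [hij]

lemma sg_i_p2 : sgen i j.succ = j.succ := by
  rw [sgen]
  apply Equiv.swap_apply_of_ne_of_ne <;> simp [Fin.ext_iff] <;> omega

lemma sg_j_p0 : sgen j i.castSucc = i.castSucc := by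
  rw [sgen]
  apply Equiv.swap_apply_of_ne_of_ne <;> simp [Fin.ext_iff] <;> omega

lemma sg_j_p1 : sgen j i.succ = j.succ := by
  rw [succ_eq_castSucc hij, sgen, Equiv.swap_apply_left]

lemma sg_j_p2 : sgen j j.succ = i.succ := by
  rw [succ_eq_castSucc hij, sgen, Equiv.swap_apply_right]

lemma sgen_braid : sgen i * sgen j * sgen i = sgen j * sgen i * sgen j := by
  have hp21 : j.succ ≠ j.castSucc := (cs_ne_succ j).symm
  have hp20 : j.succ ≠ i.castSucc := by simp [Fin.ext_iff]; omega
  have hp01 : i.castSucc ≠ j.castSucc := by simp [Fin.ext_iff]; omega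
  have hp02 : i.castSucc ≠ j.succ := by simp [Fin.ext_iff]; omega
  have h1 : Equiv.swap j.castSucc i.castSucc * Equiv.swap j.succ j.castSucc *
      Equiv.swap j.castSucc i.castSucc = Equiv.swap i.castSucc j.succ :=
    Equiv.swap_mul_swap_mul_swap hp21 hp20
  have h2 : Equiv.swap j.castSucc j.succ * Equiv.swap i.castSucc j.castSucc *
      Equiv.swap j.castSucc j.succ = Equiv.swap j.succ i.castSucc :=
    Equiv.swap_mul_swap_mul_swap hp01 hp02
  have e1 : sgen i = Equiv.swap j.castSucc i.castSucc := by
    rw [sgen, succ_eq_castSucc hij, Equiv.swap_comm]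
  have e2 : sgen j = Equiv.swap j.succ j.castSucc := by
    rw [sgen, Equiv.swap_comm]
  rw [e1, e2, h1,
    show Equiv.swap j.succ j.castSucc = Equiv.swap j.castSucc j.succ from Equiv.swap_comm _ _,
    show Equiv.swap j.castSucc i.castSucc = Equiv.swap i.castSucc j.castSucc from
      Equiv.swap_comm _ _, h2, Equiv.swap_comm]

lemma A_braid (γ : SG n) : A i (A j (A i γ)) = A j (A i (A j γ)) := by
  set x := γ⁻¹ i.castSucc with hx
  set y := γ⁻¹ i.succ with hy
  set z := γ⁻¹ j.succ with hz
  have hcs := succ_eq_castSucc hij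
  have hxyne : x ≠ y := fun he => absurd (γ⁻¹.injective he) (cs_ne_succ i)
  have hyzne : y ≠ z := fun he => absurd (γ⁻¹.injective he) (by rw [hcs]; exact cs_ne_succ j)
  have hxzne : x ≠ z := fun he => absurd (γ⁻¹.injective he)
    (by simp [Fin.ext_iff]; omega)
  rcases lt_trichotomy x y with hxy | he | hxy
  · rcases lt_trichotomy y z with hyz | he | hyz
    · -- case 1 : x < y < z
      have hxz : x < z := hxy.trans hyz
      have L1 : A i γ = sgen i * γ := A_of_lt hxy
      have L2 : A j (sgen i * γ) = sgen j * (sgen i * γ) := A_of_lt (by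
        rw [← hcs]
        simp only [inv_sgen_mul, sgen_succ, sg_i_p2 hij]
        exact hxz)
      have L3 : A i (sgen j * (sgen i * γ)) = sgen i * (sgen j * (sgen i * γ)) := A_of_lt (by
        simp only [inv_sgen_mul, sg_j_p0 hij, sg_j_p1 hij, sgen_castSucc, sg_i_p2 hij]
        exact hyz)
      have R1 : A j γ = sgen j * γ := A_of_lt (by rw [← hcs]; exact hyz)
      have R2 : A i (sgen j * γ) = sgen i * (sgen j * γ) := A_of_lt (by
        simp only [inv_sgen_mul, sg_j_p0 hij, sg_j_p1 hij]
        exact hxz)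
      have R3 : A j (sgen i * (sgen j * γ)) = sgen j * (sgen i * (sgen j * γ)) := A_of_lt (by
        rw [← hcs]
        simp only [inv_sgen_mul, sgen_succ, sg_j_p0 hij, sg_i_p2 hij, sg_j_p2 hij]
        exact hxy)
      rw [L1, L2, L3, R1, R2, R3]
      simp only [← mul_assoc]
      rw [sgen_braid hij]
    · exact absurd (γ⁻¹.injective he) (by rw [hcs]; exact cs_ne_succ j)
    · rcases lt_trichotomy x z with hxz | he | hxz
      · -- case 2 : x < z < y
        have L1 : A i γ = sgen i * γ := A_of_lt hxy
        have L2 : A j (sgen i * γ) = sgen j * (sgen i * γ) := A_of_lt (by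
          rw [← hcs]
          simp only [inv_sgen_mul, sgen_succ, sg_i_p2 hij]
          exact hxz)
        have L3 : A i (sgen j * (sgen i * γ)) = sgen j * (sgen i * γ) := A_of_gt (by
          simp only [inv_sgen_mul, sg_j_p0 hij, sg_j_p1 hij, sgen_castSucc, sg_i_p2 hij]
          exact hyz)
        have R1 : A j γ = γ := A_of_gt (by rw [← hcs]; exact hyz)
        have R2 : A i γ = sgen i * γ := A_of_lt hxy
        rw [L1, L2, L3, R1, R2, L2]
      · exact absurd (γ⁻¹.injective he) (by simp [Fin.ext_iff]; omega)
      · -- case 5 : z < x < y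
        have L1 : A i γ = sgen i * γ := A_of_lt hxy
        have L2 : A j (sgen i * γ) = sgen i * γ := A_of_gt (by
          rw [← hcs]
          simp only [inv_sgen_mul, sgen_succ, sg_i_p2 hij]
          exact hxz)
        have L3 : A i (sgen i * γ) = sgen i * γ := A_of_gt (by
          simp only [inv_sgen_mul, sgen_castSucc, sgen_succ]
          exact hxy)
        have R1 : A j γ = γ := A_of_gt (by rw [← hcs]; exact hxz.trans hxy)
        rw [L1, L2, L3, R1, L1, L2]
  · exact absurd (γ⁻¹.injective he) (cs_ne_succ i)
  · rcases lt_trichotomy y z with hyz | he | hyz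
    · rcases lt_trichotomy x z with hxz | he | hxz
      · -- case 3 : y < x < z
        have L1 : A i γ = γ := A_of_gt hxy
        have L2 : A j γ = sgen j * γ := A_of_lt (by rw [← hcs]; exact hyz)
        have L3 : A i (sgen j * γ) = sgen i * (sgen j * γ) := A_of_lt (by
          simp only [inv_sgen_mul, sg_j_p0 hij, sg_j_p1 hij]
          exact hxz)
        have R3 : A j (sgen i * (sgen j * γ)) = sgen i * (sgen j * γ) := A_of_gt (by
          rw [← hcs]
          simp only [inv_sgen_mul, sgen_succ, sg_j_p0 hij, sg_i_p2 hij, sg_j_p2 hij]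
          exact hxy)
        rw [L1, L2, L3, R3]
      · exact absurd (γ⁻¹.injective he) (by simp [Fin.ext_iff]; omega)
      · -- case 4 : y < z < x
        have L1 : A i γ = γ := A_of_gt hxy
        have L2 : A j γ = sgen j * γ := A_of_lt (by rw [← hcs]; exact hyz)
        have L3 : A i (sgen j * γ) = sgen j * γ := A_of_gt (by
          simp only [inv_sgen_mul, sg_j_p0 hij, sg_j_p1 hij]
          exact hxz)
        have R3 : A j (sgen j * γ) = sgen j * γ := A_of_gt (by
          rw [← hcs]
          simp only [inv_sgen_mul, sg_j_p1 hij, sg_j_p2 hij]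
          exact hyz)
        rw [L1, L2, L3, R3]
    · exact absurd (γ⁻¹.injective he) (by rw [hcs]; exact cs_ne_succ j)
    · -- case 6 : z < y < x
      have L1 : A i γ = γ := A_of_gt hxy
      have L2 : A j γ = γ := A_of_gt (by rw [← hcs]; exact hyz)
      rw [L1, L2, L1, L2]

end Braid

lemma not_desL_lt {n : ℕ} {i : Fin n} {w : SG n} (h : i ∉ DesL w) :
    w⁻¹ i.castSucc < w⁻¹ i.succ := by
  rw [desL_iff, not_lt] at h
  exact lt_of_le_of_ne h fun he => absurd (w⁻¹.injective he) (cs_ne_succ i)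

section Comm
variable {n : ℕ} {i j : Fin n} (hij : (i : ℕ) + 2 ≤ (j : ℕ))

include hij

lemma csg_i_q0 : sgen i j.castSucc = j.castSucc := by
  rw [sgen]; apply Equiv.swap_apply_of_ne_of_ne <;> simp [Fin.ext_iff] <;> omega

lemma csg_i_q1 : sgen i j.succ = j.succ := by
  rw [sgen]; apply Equiv.swap_apply_of_ne_of_ne <;> simp [Fin.ext_iff] <;> omega

lemma csg_j_p0 : sgen j i.castSucc = i.castSucc := by
  rw [sgen]; apply Equiv.swap_apply_of_ne_of_ne <;> simp [Fin.ext_iff] <;> omega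

lemma csg_j_p1 : sgen j i.succ = i.succ := by
  rw [sgen]; apply Equiv.swap_apply_of_ne_of_ne <;> simp [Fin.ext_iff] <;> omega

lemma sgen_comm : sgen i * sgen j = sgen j * sgen i := by
  have hd : (sgen i).Disjoint (sgen j) := by
    intro x
    by_cases hx : x = i.castSucc ∨ x = i.succ
    · right
      rw [sgen]
      rcases hx with h | h <;> subst h <;>
        apply Equiv.swap_apply_of_ne_of_ne <;> simp [Fin.ext_iff] <;> omega
    · left
      push_neg at hx
      rw [sgen]
      exact Equiv.swap_apply_of_ne_of_ne hx.1 hx.2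
  exact hd.commute.eq

lemma desL_i_sgen_j_mul (γ : SG n) : i ∈ DesL (sgen j * γ) ↔ i ∈ DesL γ := by
  rw [desL_iff, desL_iff, inv_sgen_mul, inv_sgen_mul, csg_j_p0 hij, csg_j_p1 hij]

lemma desL_j_sgen_i_mul (γ : SG n) : j ∈ DesL (sgen i * γ) ↔ j ∈ DesL γ := by
  rw [desL_iff, desL_iff, inv_sgen_mul, inv_sgen_mul, csg_i_q0 hij, csg_i_q1 hij]

omit hij in
lemma A_of_desL' {w : SG n} {k : Fin n} (h : k ∈ DesL w) : A k w = w := by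
  rw [A, if_pos h]

lemma A_comm (γ : SG n) : A i (A j γ) = A j (A i γ) := by
  by_cases di : i ∈ DesL γ <;> by_cases dj : j ∈ DesL γ
  · rw [A_of_desL' dj, A_of_desL' di, A_of_desL' dj]
  · have eJ : A j γ = sgen j * γ := A_ne_desL dj
    have eI : A i γ = γ := A_of_desL' di
    have eI2 : A i (sgen j * γ) = sgen j * γ :=
      A_of_desL' ((desL_i_sgen_j_mul hij γ).mpr di)
    rw [eJ, eI2, eI, eJ]
  · have eI : A i γ = sgen i * γ := A_ne_desL di
    have eJ : A j γ = γ := A_of_desL' dj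
    have eJ2 : A j (sgen i * γ) = sgen i * γ :=
      A_of_desL' ((desL_j_sgen_i_mul hij γ).mpr dj)
    rw [eJ, eI, eJ2]
  · have eJ : A j γ = sgen j * γ := A_ne_desL dj
    have eI : A i γ = sgen i * γ := A_ne_desL di
    have eI2 : A i (sgen j * γ) = sgen i * (sgen j * γ) :=
      A_ne_desL (fun hmem => di ((desL_i_sgen_j_mul hij γ).mp hmem))
    have eJ2 : A j (sgen i * γ) = sgen j * (sgen i * γ) :=
      A_ne_desL (fun hmem => dj ((desL_j_sgen_i_mul hij γ).mp hmem))
    rw [eJ, eI2, eI, eJ2, ← mul_assoc, ← mul_assoc, sgen_comm hij]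

end Comm

-- ===== Part C : the regular representation =====

abbrev RegMod (n : ℕ) := SG n →₀ ℂ

noncomputable def T {n : ℕ} (i : Fin n) : RegMod n →ₗ[ℂ] RegMod n :=
  Finsupp.lift (RegMod n) ℂ (SG n) (fun γ => Finsupp.single (A i γ) 1)

lemma T_single {n : ℕ} (i : Fin n) (γ : SG n) :
    T i (Finsupp.single γ 1) = Finsupp.single (A i γ) 1 := by
  rw [T, Finsupp.lift_apply, Finsupp.sum_single_index (by simp), one_smul]

lemma end_ext {n : ℕ} {f g : Module.End ℂ (RegMod n)}
    (h : ∀ γ, f (Finsupp.single γ 1) = g (Finsupp.single γ 1)) : f = g :=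
  Finsupp.lhom_ext fun γ b => by
    have hb : (Finsupp.single γ b : RegMod n) = b • Finsupp.single γ 1 := by
      rw [Finsupp.smul_single, smul_eq_mul, mul_one]
    rw [hb, map_smul, map_smul, h γ]

noncomputable def Trep {n : ℕ} : Hecke n →ₐ[ℂ] Module.End ℂ (RegMod n) :=
  RingQuot.liftAlgHom ℂ ⟨FreeAlgebra.lift ℂ (fun i => T i), by
    intro x y hxy
    induction hxy with
    | idem i =>
        simp only [map_mul, FreeAlgebra.lift_ι_apply]
        exact end_ext fun γ => by
          rw [Module.End.mul_apply, T_single, T_single, A_idem]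
    | braid i j hij =>
        simp only [map_mul, FreeAlgebra.lift_ι_apply]
        exact end_ext fun γ => by
          rw [Module.End.mul_apply, Module.End.mul_apply, Module.End.mul_apply,
            Module.End.mul_apply, T_single, T_single, T_single, T_single, T_single, T_single,
            A_braid hij]
    | comm i j hij =>
        simp only [map_mul, FreeAlgebra.lift_ι_apply]
        exact end_ext fun γ => by
          rw [Module.End.mul_apply, Module.End.mul_apply, T_single, T_single, T_single,
            T_single, A_comm hij]⟩

lemma Trep_hpi {n : ℕ} (i : Fin n) : Trep (hpi i) = T i := by
  rw [hpi, Trep, RingQuot.liftAlgHom_mkAlgHom_apply, FreeAlgebra.lift_ι_apply]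

lemma Trep_hpibar {n : ℕ} (i : Fin n) : Trep (hpibar i) = T i - 1 := by
  rw [hpibar, map_sub, map_one, Trep_hpi]

-- ===== Part D : action along words =====

lemma len_word_mul_le {n : ℕ} (l : List (Fin n)) (δ : SG n) :
    len ((l.map sgen).prod * δ) ≤ l.length + len δ := by
  induction l with
  | nil => simp
  | cons i t ih =>
      simp only [List.map_cons, List.prod_cons, List.length_cons, mul_assoc]
      have := len_sgen_mul_le i ((t.map sgen).prod * δ)
      omega

lemma Trep_word_single {n : ℕ} (l : List (Fin n)) (δ : SG n)
    (h : len ((l.map sgen).prod * δ) = l.length + len δ) :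
    Trep ((l.map hpi).prod) (Finsupp.single δ 1) =
      Finsupp.single ((l.map sgen).prod * δ) 1 := by
  induction l with
  | nil => simp
  | cons i t ih =>
      simp only [List.map_cons, List.prod_cons, List.length_cons, map_mul] at h ⊢
      rw [mul_assoc] at h
      set X := (t.map sgen).prod * δ with hX
      have hle : len X ≤ t.length + len δ := len_word_mul_le t δ
      have hs := len_sgen_mul_le i X
      have hXlen : len X = t.length + len δ := by omega
      have hnd : i ∉ DesL X := by
        intro hd
        rw [DesL, Set.mem_setOf_eq] at hd
        omega
      rw [Module.End.mul_apply, ih hXlen, Trep_hpi, T_single, A_ne_desL hnd, mul_assoc]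

lemma T_apply_ne {n : ℕ} (i : Fin n) (v : RegMod n) (γ : SG n)
    (h : T i v γ ≠ 0) : ∃ δ, v δ ≠ 0 ∧ γ = A i δ := by
  rw [T, Finsupp.lift_apply] at h
  rw [Finsupp.sum_apply] at h
  obtain ⟨δ, hδmem, hδ⟩ := Finset.exists_ne_zero_of_sum_ne_zero h
  refine ⟨δ, Finsupp.mem_support_iff.mp hδmem, ?_⟩
  by_contra hne
  apply hδ
  simp only [Finsupp.smul_apply, Finsupp.single_apply,
    if_neg (fun he : A i δ = γ => hne he.symm), smul_zero]

lemma Trep_word_apply_ne {n : ℕ} (l : List (Fin n)) (v : RegMod n) (γ : SG n)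
    (h : Trep ((l.map hpi).prod) v γ ≠ 0) :
    ∃ δ, v δ ≠ 0 ∧ len γ ≤ l.length + len δ := by
  induction l generalizing γ with
  | nil =>
      simp only [List.map_nil, List.prod_nil, map_one, Module.End.one_apply] at h
      exact ⟨γ, h, by simp⟩
  | cons i t ih =>
      simp only [List.map_cons, List.prod_cons, map_mul, Module.End.mul_apply, Trep_hpi] at h
      obtain ⟨δ1, hδ1, rfl⟩ := T_apply_ne i _ γ h
      obtain ⟨δ, hδ, hlen⟩ := ih δ1 hδ1
      refine ⟨δ, hδ, ?_⟩
      have := len_A i δ1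
      simp only [List.length_cons]
      omega

lemma Trep_word_bar {n : ℕ} (l : List (Fin n))
    (h : len ((l.map sgen).prod) = l.length) :
    ∃ r : RegMod n,
      Trep ((l.map hpibar).prod) (Finsupp.single 1 1) =
        Finsupp.single ((l.map sgen).prod) 1 + r ∧
      ∀ γ, r γ ≠ 0 → len γ < len ((l.map sgen).prod) := by
  induction l with
  | nil => exact ⟨0, by simp, by simp⟩
  | cons i t ih =>
      simp only [List.map_cons, List.prod_cons, List.length_cons, map_mul] at h ⊢
      set X := (t.map sgen).prod with hX
      have hle : len X ≤ t.length := by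
        have := len_word_mul_le t 1
        rw [mul_one] at this
        simp [len_one] at this
        exact this
      have hs := len_sgen_mul_le i X
      have hXlen : len X = t.length := by omega
      have hnd : i ∉ DesL X := by
        intro hd
        rw [DesL, Set.mem_setOf_eq] at hd
        omega
      have hup : len (sgen i * X) = len X + 1 := len_sgen_mul_of_not_desL i X hnd
      obtain ⟨r, hr, hrb⟩ := ih hXlen
      refine ⟨-Finsupp.single X 1 + (T i - 1) r, ?_, ?_⟩
      · rw [Module.End.mul_apply, hr, Trep_hpibar, map_add]
        have h1 : (T i - 1) (Finsupp.single X 1) =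
            Finsupp.single (sgen i * X) 1 - Finsupp.single X 1 := by
          rw [LinearMap.sub_apply, Module.End.one_apply, T_single, A_ne_desL hnd]
        rw [h1]
        abel
      · intro γ hγ
        rw [Finsupp.add_apply, Finsupp.neg_apply] at hγ
        have : Finsupp.single X (1:ℂ) γ ≠ 0 ∨ ((T i - 1) r) γ ≠ 0 := by
          by_contra hcon
          push_neg at hcon
          rw [hcon.1, hcon.2, neg_zero, add_zero] at hγ
          exact hγ rfl
        rcases this with hc | hc
        · have : γ = X := by
            by_contra hne
            rw [Finsupp.single_apply, if_neg (fun he => hne he.symm)] at hc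
            exact hc rfl
          rw [this, hup]
          omega
        · rw [LinearMap.sub_apply, Module.End.one_apply, Finsupp.sub_apply] at hc
          have : T i r γ ≠ 0 ∨ r γ ≠ 0 := by
            by_contra hcon
            push_neg at hcon
            rw [hcon.1, hcon.2, sub_zero] at hc
            exact hc rfl
          rcases this with hc2 | hc2
          · obtain ⟨δ, hδ, rfl⟩ := T_apply_ne i r γ hc2
            have h1 := hrb δ hδ
            have h2 := len_A i δ
            omega
          · have := hrb γ hc2
            omega

-- ===== Part E : final assembly =====

lemma piPerm_spec {n : ℕ} (σ : SG n) :
    ∃ l : List (Fin n), IsReducedWord l σ ∧ piPerm σ = (l.map hpi).prod ∧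
      pibarPerm σ = (l.map hpibar).prod := by
  have h := exists_reduced_word σ
  exact ⟨h.choose, h.choose_spec, by rw [piPerm, dif_pos h], by rw [pibarPerm, dif_pos h]⟩

theorem stmt1' (n : ℕ) (σ ρ : SG n) (h : len (σ * ρ) = len σ + len ρ)
    (c : SG n → ℂ) (hc : piPerm σ * pibarPerm ρ = ∑ γ : SG n, c γ • piPerm γ) :
    c (σ * ρ) = 1 ∧ ∀ γ : SG n, c γ ≠ 0 → γ ≠ σ * ρ → len γ < len (σ * ρ) := by
  obtain ⟨lσ, ⟨hlσ1, hlσ2⟩, hpiσ, -⟩ := piPerm_spec σ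
  obtain ⟨lρ, ⟨hlρ1, hlρ2⟩, -, hbarρ⟩ := piPerm_spec ρ
  obtain ⟨r, hr, hrb⟩ := Trep_word_bar lρ (by rw [hlρ1, ← hlρ2])
  rw [hlρ1] at hr hrb
  set R2 : RegMod n := Trep ((lσ.map hpi).prod) r with hR2
  have hL : Trep (piPerm σ * pibarPerm ρ) (Finsupp.single 1 1)
      = Finsupp.single (σ * ρ) 1 + R2 := by
    rw [map_mul, Module.End.mul_apply, hbarρ, hr, hpiσ, map_add,
      Trep_word_single lσ ρ (by rw [hlσ1, h, hlσ2]), hlσ1]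
  have hr2 : ∀ γ, R2 γ ≠ 0 → len γ < len (σ * ρ) := by
    intro γ hγ
    obtain ⟨δ, hδ, hlen⟩ := Trep_word_apply_ne lσ r γ hγ
    have h3 := hrb δ hδ
    rw [h]
    omega
  have hR : Trep (∑ γ : SG n, c γ • piPerm γ) (Finsupp.single 1 1)
      = ∑ γ : SG n, c γ • (Finsupp.single γ 1 : RegMod n) := by
    rw [map_sum]
    rw [LinearMap.sum_apply]
    refine Finset.sum_congr rfl fun γ _ => ?_
    obtain ⟨l, ⟨h1, h2⟩, hp, -⟩ := piPerm_spec γ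
    rw [hp, map_smul, LinearMap.smul_apply,
      Trep_word_single l 1 (by rw [mul_one, h1, len_one, add_zero, ← h2]), mul_one, h1]
  have E : Finsupp.single (σ * ρ) 1 + R2
      = ∑ γ : SG n, c γ • (Finsupp.single γ 1 : RegMod n) := by
    rw [← hL, ← hR, hc]
  have hcoeff : ∀ τ : SG n,
      (∑ γ : SG n, c γ • (Finsupp.single γ 1 : RegMod n)) τ = c τ := by
    intro τ
    rw [Finset.sum_apply']
    simp [Finsupp.single_apply]
  constructor
  · have hE := congrArg (fun v : RegMod n => v (σ * ρ)) E
    simp only [Finsupp.add_apply, Finsupp.single_eq_same] at hE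
    rw [hcoeff] at hE
    have : R2 (σ * ρ) = 0 := by
      by_contra hne
      exact absurd (hr2 _ hne) (lt_irrefl _)
    rw [this, add_zero] at hE
    exact hE.symm ▸ hE
  · intro γ hcγ hne
    have hE := congrArg (fun v : RegMod n => v γ) E
    simp only [Finsupp.add_apply] at hE
    rw [hcoeff, Finsupp.single_apply, if_neg (fun he => hne he.symm)] at hE
    rw [zero_add] at hE
    apply hr2
    rw [hE]
    exact hcγ

/-- If `ℓ(σρ) = ℓ(σ) + ℓ(ρ)`, then in any expansion of `π_σ π̄_ρ` in the basis
`{π_γ : γ ∈ S_n}`, the coefficient of `π_{σρ}` is `1` and `σρ` is the unique element of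
maximal length among the `γ` whose coefficient is nonzero. -/
theorem stmt1 (n : ℕ) (σ ρ : SG n) (h : len (σ * ρ) = len σ + len ρ)
    (c : SG n → ℂ) (hc : piPerm σ * pibarPerm ρ = ∑ γ : SG n, c γ • piPerm γ) :
    c (σ * ρ) = 1 ∧ ∀ γ : SG n, c γ ≠ 0 → γ ≠ σ * ρ → len γ < len (σ * ρ) :=
  stmt1' n σ ρ h c hc

end
end

section
/- For σ, ρ ∈ S_m and σ', ρ' ∈ S_n, the union over all γ ∈ [σ,ρ]_L and γ' ∈ [σ',ρ']_L of the sets of (m,n)-shuffles of γ and γ' equals the left weak Bruhat interval [σ*σ', ρ⊛ρ']_L in S_{m+n}. -/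
open scoped Classical

noncomputable section

/-- Standardization of an injective tuple in a linear order: the permutation recording
relative ranks. -/
noncomputable def std {k : ℕ} {α : Type*} [Fintype α] [LinearOrder α]
    (f : Fin k → α) (hf : Function.Injective f) : Equiv.Perm (Fin k) :=
  (Equiv.ofInjective f hf).trans
    ((Equiv.subtypeEquivRight (fun x => by simp)).trans
      ((Finset.univ.image f).orderIsoOfFin
        (by rw [Finset.card_image_of_injective _ hf, Finset.card_univ,
          Fintype.card_fin])).symm.toEquiv)

/-- `st(γ; [1, m+1])`, the standardization of `γ` on the first `m+1` positions. -/
noncomputable def stL {m n : ℕ} (γ : SG (m + n + 1)) : SG m :=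
  std (fun i : Fin (m + 1) => γ ⟨(i : ℕ), by have := i.isLt; omega⟩)
    (by
      intro a b hab
      have h1 := γ.injective hab
      simp only [Fin.mk.injEq] at h1
      exact Fin.ext h1)

/-- `st(γ; [m+2, m+n+2])`, the standardization of `γ` on the last `n+1` positions. -/
noncomputable def stR {m n : ℕ} (γ : SG (m + n + 1)) : SG n :=
  std (fun j : Fin (n + 1) => γ ⟨m + 1 + (j : ℕ), by have := j.isLt; omega⟩)
    (by
      intro a b hab
      have h1 := γ.injective hab
      simp only [Fin.mk.injEq] at h1
      exact Fin.ext (by omega))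

/-- `σ * τ`, the "concatenation" permutation in `S_{(m+1)+(n+1)}`. -/
def ast {m n : ℕ} (σ : SG m) (τ : SG n) : SG (m + n + 1) :=
  (finCongr (by omega : (m + 1) + (n + 1) = m + n + 2)).permCongr
    (finSumFinEquiv.permCongr (Equiv.sumCongr σ τ))

/-- The longest element `δ_max` of `R_{m+1,n+1}`. -/
def deltaMax (m n : ℕ) : SG (m + n + 1) :=
  (finCongr (by omega : m + n + 2 = (m + 1) + (n + 1))).trans
    (finSumFinEquiv.symm.trans
      ((Equiv.sumComm (Fin (m + 1)) (Fin (n + 1))).trans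
        (finSumFinEquiv.trans (finCongr (by omega : (n + 1) + (m + 1) = m + n + 2)))))

/-- `σ ⊛ τ`, the "shifted concatenation" permutation: `(σ⊛τ)(i) = σ(i)+n` on the first block
and `(σ⊛τ)(m+j) = τ(j)` on the second. -/
def ostar {m n : ℕ} (σ : SG m) (τ : SG n) : SG (m + n + 1) :=
  deltaMax m n * ast σ τ

/-- The set `R_{m+1,n+1}` of permutations increasing on the first `m+1` and on the last `n+1`
positions (the minimal length coset representatives). -/
def Rmn (m n : ℕ) : Set (SG (m + n + 1)) :=
  {δ | (∀ i j : Fin (m + n + 2), i < j → (j : ℕ) < m + 1 → δ i < δ j) ∧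
       (∀ i j : Fin (m + n + 2), m + 1 ≤ (i : ℕ) → i < j → δ i < δ j)}

section Aux

lemma card_eq_of_mem_iff {α : Type*} {s t : Finset α} (h : ∀ p, p ∈ s ↔ p ∈ t) :
    s.card = t.card := congrArg Finset.card (Finset.ext h)

lemma filter_split_card {α : Type*} [Fintype α] (X Y Z W : α → Prop)
    [DecidablePred X] [DecidablePred Z] [DecidablePred W]
    (hZ : ∀ p, Z p ↔ X p ∧ Y p) (hW : ∀ p, W p ↔ X p ∧ ¬ Y p) :
    (Finset.univ.filter X).card
      = (Finset.univ.filter Z).card + (Finset.univ.filter W).card := by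
  classical
  rw [← Finset.card_filter_add_card_filter_not
    (s := Finset.univ.filter X) Y]
  congr 1
  · apply card_eq_of_mem_iff
    intro p
    simp only [Finset.mem_filter, Finset.mem_univ, true_and, hZ p]
  · apply card_eq_of_mem_iff
    intro p
    simp only [Finset.mem_filter, Finset.mem_univ, true_and, hW p]

lemma len_transport {k : ℕ} (σ γ : SG k) :
    len γ = (Finset.univ.filter fun p : Fin (k+1) × Fin (k+1) =>
      p.1 < p.2 ∧ ¬((σ p.2 < σ p.1) ↔ ((γ * σ) p.2 < (γ * σ) p.1))).card := by
  apply Finset.card_nbij'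
    (fun q : Fin (k+1) × Fin (k+1) =>
      if σ⁻¹ q.1 < σ⁻¹ q.2 then (σ⁻¹ q.1, σ⁻¹ q.2) else (σ⁻¹ q.2, σ⁻¹ q.1))
    (fun p : Fin (k+1) × Fin (k+1) =>
      if σ p.1 < σ p.2 then (σ p.1, σ p.2) else (σ p.2, σ p.1))
  · rintro ⟨a, b⟩ hq
    simp only [Finset.coe_filter, Set.mem_setOf_eq, Finset.mem_filter, Finset.mem_univ, true_and, Equiv.Perm.mul_apply] at hq
    obtain ⟨hab, hγ⟩ := hq
    have hne : σ⁻¹ a ≠ σ⁻¹ b := fun h => absurd (σ⁻¹.injective h) hab.ne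
    dsimp only
    rw [Finset.mem_coe, Finset.mem_filter]
    split_ifs with h <;>
      simp only [Finset.coe_filter, Set.mem_setOf_eq, Finset.mem_filter, Finset.mem_univ, true_and, Equiv.Perm.mul_apply,
        Equiv.Perm.inv_def, Equiv.apply_symm_apply]
    · exact ⟨h, fun hiff => absurd (hiff.mpr hγ) (not_lt.2 hab.le)⟩
    · exact ⟨lt_of_le_of_ne (not_lt.1 h) (Ne.symm hne),
        fun hiff => absurd (hiff.mp hab) (not_lt.2 hγ.le)⟩
  · rintro ⟨a, b⟩ hp
    rw [Finset.mem_coe, Finset.mem_filter] at hp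
    simp only [Finset.coe_filter, Set.mem_setOf_eq, Finset.mem_filter, Finset.mem_univ, true_and, Equiv.Perm.mul_apply] at hp
    obtain ⟨hab, hx⟩ := hp
    have hne : σ a ≠ σ b := fun h => absurd (σ.injective h) hab.ne
    dsimp only
    split_ifs with h <;>
      simp only [Finset.coe_filter, Set.mem_setOf_eq, Finset.mem_filter, Finset.mem_univ, true_and]
    · refine ⟨h, ?_⟩
      by_contra hc
      exact hx ⟨fun h1 => absurd h (not_lt.2 h1.le), fun h2 => absurd h2 hc⟩
    · have h' : σ b < σ a := lt_of_le_of_ne (not_lt.1 h) (Ne.symm hne)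
      have h2 : ¬ γ (σ b) < γ (σ a) := fun hg => hx ⟨fun _ => hg, fun _ => h'⟩
      have hne2 : γ (σ a) ≠ γ (σ b) := fun hh => hab.ne (σ.injective (γ.injective hh))
      exact ⟨h', lt_of_le_of_ne (not_lt.1 h2) hne2⟩
  · rintro ⟨a, b⟩ hq
    simp only [Finset.coe_filter, Set.mem_setOf_eq, Finset.mem_filter, Finset.mem_univ, true_and] at hq
    by_cases h : σ⁻¹ a < σ⁻¹ b <;>
      simp only [Equiv.Perm.inv_def] at h <;> simp [h, Equiv.apply_symm_apply, hq.1, asymm hq.1]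
  · rintro ⟨a, b⟩ hp
    simp only [Finset.coe_filter, Set.mem_setOf_eq, Finset.mem_filter, Finset.mem_univ, true_and] at hp
    by_cases h : σ a < σ b <;>
      simp [h, Equiv.symm_apply_apply, hp.1, asymm hp.1]

lemma len_transport' {k : ℕ} (σ ρ : SG k) :
    len (ρ * σ⁻¹) = (Finset.univ.filter fun p : Fin (k+1) × Fin (k+1) =>
      p.1 < p.2 ∧ ¬((σ p.2 < σ p.1) ↔ (ρ p.2 < ρ p.1))).card := by
  have h := len_transport σ (ρ * σ⁻¹)
  simpa only [inv_mul_cancel_right] using h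

lemma leL_iff {k : ℕ} (σ ρ : SG k) :
    leL σ ρ ↔ ∀ i j : Fin (k+1), i < j → σ j < σ i → ρ j < ρ i := by
  classical
  have hρ : ρ = (ρ * σ⁻¹) * σ := by group
  have hleL : leL σ ρ ↔ len ρ = len σ + len (ρ * σ⁻¹) := by
    constructor
    · rintro ⟨γ', h1, h2⟩
      have hg : γ' = ρ * σ⁻¹ := by rw [h1]; group
      rwa [hg] at h2
    · intro h
      exact ⟨ρ * σ⁻¹, hρ, h⟩
  have e1 : len ρ
      = (Finset.univ.filter fun p : Fin (k+1) × Fin (k+1) =>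
          p.1 < p.2 ∧ σ p.2 < σ p.1 ∧ ρ p.2 < ρ p.1).card
        + (Finset.univ.filter fun p : Fin (k+1) × Fin (k+1) =>
          p.1 < p.2 ∧ ¬ σ p.2 < σ p.1 ∧ ρ p.2 < ρ p.1).card :=
    filter_split_card _ (fun p => σ p.2 < σ p.1) _ _ (fun p => by tauto) (fun p => by tauto)
  have e2 : len σ
      = (Finset.univ.filter fun p : Fin (k+1) × Fin (k+1) =>
          p.1 < p.2 ∧ σ p.2 < σ p.1 ∧ ρ p.2 < ρ p.1).card
        + (Finset.univ.filter fun p : Fin (k+1) × Fin (k+1) =>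
          p.1 < p.2 ∧ σ p.2 < σ p.1 ∧ ¬ ρ p.2 < ρ p.1).card :=
    filter_split_card _ (fun p => ρ p.2 < ρ p.1) _ _ (fun p => by tauto) (fun p => by tauto)
  have e3 : len (ρ * σ⁻¹)
      = (Finset.univ.filter fun p : Fin (k+1) × Fin (k+1) =>
          p.1 < p.2 ∧ σ p.2 < σ p.1 ∧ ¬ ρ p.2 < ρ p.1).card
        + (Finset.univ.filter fun p : Fin (k+1) × Fin (k+1) =>
          p.1 < p.2 ∧ ¬ σ p.2 < σ p.1 ∧ ρ p.2 < ρ p.1).card := by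
    rw [len_transport' σ ρ]
    exact filter_split_card _ (fun p => σ p.2 < σ p.1) _ _ (fun p => by tauto)
      (fun p => by tauto)
  rw [hleL, e1, e2, e3]
  constructor
  · intro h i j hij hσ
    by_contra hc
    have hb : 0 < (Finset.univ.filter fun p : Fin (k+1) × Fin (k+1) =>
        p.1 < p.2 ∧ σ p.2 < σ p.1 ∧ ¬ ρ p.2 < ρ p.1).card :=
      Finset.card_pos.2 ⟨(i, j), by
        simp only [Finset.mem_filter, Finset.mem_univ, true_and]
        exact ⟨hij, hσ, hc⟩⟩
    omega
  · intro h
    have hb : (Finset.univ.filter fun p : Fin (k+1) × Fin (k+1) =>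
        p.1 < p.2 ∧ σ p.2 < σ p.1 ∧ ¬ ρ p.2 < ρ p.1).card = 0 := by
      rw [Finset.card_eq_zero, Finset.filter_eq_empty_iff]
      rintro p - ⟨h1, h2, h3⟩
      exact h3 (h p.1 p.2 h1 h2)
    omega

lemma std_lt_iff {k : ℕ} {α : Type*} [Fintype α] [LinearOrder α]
    (f : Fin k → α) (hf : Function.Injective f) (i j : Fin k) :
    std f hf i < std f hf j ↔ f i < f j := by
  unfold std
  simp only [Equiv.trans_apply, Equiv.ofInjective_apply, Equiv.subtypeEquivRight_apply,
    RelIso.coe_fn_toEquiv]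
  rw [OrderIso.lt_iff_lt]
  exact Subtype.mk_lt_mk

/-- Embedding of a position in the first block. -/
def posL {m n : ℕ} (a : Fin (m + 1)) : Fin (m + n + 2) := ⟨(a : ℕ), by omega⟩

/-- Embedding of a position in the second block. -/
def posR {m n : ℕ} (b : Fin (n + 1)) : Fin (m + n + 2) := ⟨m + 1 + (b : ℕ), by omega⟩

lemma pos_cases {m n : ℕ} (x : Fin (m + n + 2)) :
    (∃ a : Fin (m+1), x = posL a) ∨ (∃ b : Fin (n+1), x = posR b) := by
  rcases lt_or_ge (x : ℕ) (m + 1) with h | h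
  · exact Or.inl ⟨⟨(x : ℕ), h⟩, Fin.ext rfl⟩
  · exact Or.inr ⟨⟨(x : ℕ) - (m + 1), by have := x.isLt; omega⟩, Fin.ext (by
      simp only [posR]
      omega)⟩

lemma posL_lt_posL {m n : ℕ} (a b : Fin (m+1)) :
    (posL a : Fin (m+n+2)) < posL b ↔ a < b := Iff.rfl

lemma posR_lt_posR {m n : ℕ} (a b : Fin (n+1)) :
    (posR a : Fin (m+n+2)) < posR b ↔ a < b := by
  simp only [posR, Fin.lt_def]
  omega

lemma posL_lt_posR {m n : ℕ} (a : Fin (m+1)) (b : Fin (n+1)) :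
    (posL a : Fin (m+n+2)) < posR b := by
  simp only [posL, posR, Fin.lt_def]
  have := a.isLt
  omega

lemma not_posR_lt_posL {m n : ℕ} (a : Fin (n+1)) (b : Fin (m+1)) :
    ¬ (posR a : Fin (m+n+2)) < posL b := by
  simp only [posL, posR, Fin.lt_def]
  have := b.isLt
  omega

lemma ast_posL {m n : ℕ} (σ : SG m) (τ : SG n) (a : Fin (m+1)) :
    ((ast σ τ) (posL a) : ℕ) = σ a := by
  have hx : (finCongr (by omega : m+n+2 = (m+1)+(n+1))) (posL a : Fin (m+n+2))
      = Fin.castAdd (n+1) a := by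
    apply Fin.ext; simp [posL]
  simp only [ast, Equiv.permCongr_apply, finCongr_symm, hx,
    finSumFinEquiv_symm_apply_castAdd, Equiv.sumCongr_apply, Sum.map_inl,
    finSumFinEquiv_apply_left, finCongr_apply, Fin.coe_cast, Fin.coe_castAdd]

lemma ast_posR {m n : ℕ} (σ : SG m) (τ : SG n) (b : Fin (n+1)) :
    ((ast σ τ) (posR b) : ℕ) = m + 1 + τ b := by
  have hx : (finCongr (by omega : m+n+2 = (m+1)+(n+1))) (posR b : Fin (m+n+2))
      = Fin.natAdd (m+1) b := by
    apply Fin.ext; simp [posR]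
  simp only [ast, Equiv.permCongr_apply, finCongr_symm, hx,
    finSumFinEquiv_symm_apply_natAdd, Equiv.sumCongr_apply, Sum.map_inr,
    finSumFinEquiv_apply_right, finCongr_apply, Fin.coe_cast, Fin.coe_natAdd]

lemma deltaMax_apply_lt {m n : ℕ} (x : Fin (m+n+2)) (h : (x:ℕ) < m+1) :
    ((deltaMax m n) x : ℕ) = n + 1 + (x:ℕ) := by
  have hx : (finCongr (by omega : m+n+2 = (m+1)+(n+1))) x
      = Fin.castAdd (n+1) ⟨(x:ℕ), h⟩ := by
    apply Fin.ext; simp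
  simp only [deltaMax, Equiv.trans_apply, hx, finSumFinEquiv_symm_apply_castAdd,
    Equiv.sumComm_apply, Sum.swap_inl, finSumFinEquiv_apply_right, finCongr_apply,
    Fin.coe_cast, Fin.coe_natAdd]

lemma deltaMax_apply_ge {m n : ℕ} (x : Fin (m+n+2)) (h : m+1 ≤ (x:ℕ)) :
    ((deltaMax m n) x : ℕ) = (x:ℕ) - (m+1) := by
  have hx : (finCongr (by omega : m+n+2 = (m+1)+(n+1))) x
      = Fin.natAdd (m+1) ⟨(x:ℕ) - (m+1), by have := x.isLt; omega⟩ := by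
    apply Fin.ext; simp; omega
  simp only [deltaMax, Equiv.trans_apply, hx, finSumFinEquiv_symm_apply_natAdd,
    Equiv.sumComm_apply, Sum.swap_inr, finSumFinEquiv_apply_left, finCongr_apply,
    Fin.coe_cast, Fin.coe_castAdd]

lemma ostar_posL {m n : ℕ} (σ : SG m) (τ : SG n) (a : Fin (m+1)) :
    ((ostar σ τ) (posL a) : ℕ) = n + 1 + σ a := by
  have h1 : ((ast σ τ) (posL a) : ℕ) = σ a := ast_posL σ τ a
  have h2 : ((ast σ τ) (posL a) : ℕ) < m + 1 := by
    rw [h1]; exact Nat.lt_succ_of_le (σ a).is_le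
  rw [ostar, Equiv.Perm.mul_apply, deltaMax_apply_lt _ h2, h1]

lemma ostar_posR {m n : ℕ} (σ : SG m) (τ : SG n) (b : Fin (n+1)) :
    ((ostar σ τ) (posR b) : ℕ) = τ b := by
  have h1 : ((ast σ τ) (posR b) : ℕ) = m + 1 + τ b := ast_posR σ τ b
  have h2 : m + 1 ≤ ((ast σ τ) (posR b) : ℕ) := by omega
  rw [ostar, Equiv.Perm.mul_apply, deltaMax_apply_ge _ h2, h1]
  omega

lemma stL_lt_iff {m n : ℕ} (ξ : SG (m + n + 1)) (a b : Fin (m+1)) :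
    stL ξ a < stL ξ b ↔ ξ (posL a) < ξ (posL b) := by
  unfold stL
  exact std_lt_iff _ _ a b

lemma stR_lt_iff {m n : ℕ} (ξ : SG (m + n + 1)) (a b : Fin (n+1)) :
    stR ξ a < stR ξ b ↔ ξ (posR a) < ξ (posR b) := by
  unfold stR
  exact std_lt_iff _ _ a b

end Aux

/-- `[σ,ρ]_L ⧢ [σ',ρ']_L = [σ*σ', ρ⊛ρ']_L`: a permutation `ξ` is an `(m,n)`-shuffle of some
`γ ∈ [σ,ρ]_L` and some `γ' ∈ [σ',ρ']_L` iff `ξ` lies in the left weak Bruhat interval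
`[σ*σ', ρ⊛ρ']_L`. -/
theorem stmt11 (m n : ℕ) (σ ρ : SG m) (σ' ρ' : SG n) (ξ : SG (m + n + 1)) :
    (∃ γ γ', (leL σ γ ∧ leL γ ρ) ∧ (leL σ' γ' ∧ leL γ' ρ') ∧ stL ξ = γ ∧ stR ξ = γ') ↔
      (leL (ast σ σ') ξ ∧ leL ξ (ostar ρ ρ')) := by
  have hL : (∃ γ γ', (leL σ γ ∧ leL γ ρ) ∧ (leL σ' γ' ∧ leL γ' ρ') ∧ stL ξ = γ ∧ stR ξ = γ')
      ↔ ((leL σ (stL ξ) ∧ leL (stL ξ) ρ) ∧ (leL σ' (stR ξ) ∧ leL (stR ξ) ρ')) := by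
    constructor
    · rintro ⟨γ, γ', hc, hc', h1, h2⟩
      subst h1; subst h2
      exact ⟨hc, hc'⟩
    · rintro ⟨hc, hc'⟩
      exact ⟨_, _, hc, hc', rfl, rfl⟩
  rw [hL, leL_iff, leL_iff, leL_iff, leL_iff, leL_iff, leL_iff]
  constructor
  · rintro ⟨⟨hA, hB⟩, hC, hD⟩
    constructor
    · intro i j hij hast
      rcases pos_cases i with ⟨a, rfl⟩ | ⟨a, rfl⟩ <;> rcases pos_cases j with ⟨b, rfl⟩ | ⟨b, rfl⟩
      · have hab : a < b := (posL_lt_posL a b).1 hij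
        have hv : σ b < σ a := by
          have := Fin.lt_def.1 hast
          rw [ast_posL, ast_posL] at this
          exact Fin.lt_def.2 this
        have := hA a b hab hv
        rwa [stL_lt_iff] at this
      · exfalso
        have := Fin.lt_def.1 hast
        rw [ast_posR, ast_posL] at this
        have := (σ a).is_le
        omega
      · exact absurd hij (not_posR_lt_posL a b)
      · have hab : a < b := (posR_lt_posR a b).1 hij
        have hv : σ' b < σ' a := by
          have := Fin.lt_def.1 hast
          rw [ast_posR, ast_posR] at this
          exact Fin.lt_def.2 (by omega)
        have := hC a b hab hv
        rwa [stR_lt_iff] at this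
    · intro i j hij hxi
      rcases pos_cases i with ⟨a, rfl⟩ | ⟨a, rfl⟩ <;> rcases pos_cases j with ⟨b, rfl⟩ | ⟨b, rfl⟩
      · have hab : a < b := (posL_lt_posL a b).1 hij
        have hv : stL ξ b < stL ξ a := (stL_lt_iff ξ b a).2 hxi
        have := hB a b hab hv
        rw [Fin.lt_def, ostar_posL, ostar_posL]
        omega
      · rw [Fin.lt_def, ostar_posR, ostar_posL]
        have := (ρ' b).is_le
        omega
      · exact absurd hij (not_posR_lt_posL a b)
      · have hab : a < b := (posR_lt_posR a b).1 hij
        have hv : stR ξ b < stR ξ a := (stR_lt_iff ξ b a).2 hxi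
        have := hD a b hab hv
        rw [Fin.lt_def, ostar_posR, ostar_posR]
        omega
  · rintro ⟨hR1, hR2⟩
    refine ⟨⟨?_, ?_⟩, ?_, ?_⟩
    · intro a b hab hv
      rw [stL_lt_iff]
      apply hR1 _ _ ((posL_lt_posL a b).2 hab)
      rw [Fin.lt_def, ast_posL, ast_posL]
      exact hv
    · intro a b hab hv
      rw [stL_lt_iff] at hv
      have := hR2 _ _ ((posL_lt_posL a b).2 hab) hv
      rw [Fin.lt_def, ostar_posL, ostar_posL] at this
      exact Fin.lt_def.2 (by omega)
    · intro a b hab hv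
      rw [stR_lt_iff]
      apply hR1 _ _ ((posR_lt_posR a b).2 hab)
      rw [Fin.lt_def, ast_posR, ast_posR]
      have : (σ' b : ℕ) < σ' a := hv
      omega
    · intro a b hab hv
      rw [stR_lt_iff] at hv
      have := hR2 _ _ ((posR_lt_posR a b).2 hab) hv
      rw [Fin.lt_def, ostar_posR, ostar_posR] at this
      exact Fin.lt_def.2 this


end
end
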